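/- arXiv:2603.20776 — 5 statements merged into one kernel-verified Lean document; each statement's English description precedes it below -/
import Mathlib

section
/- There exists a constant C > 0 such that for every ℓ > 0 with ℓ⁻¹ ∈ ℕ the following holds for the step function u ∈ L²([0,1]³; ℝ) defined by u(x) = Σ_{s=0}^{2ℓ⁻¹−1} cos((πℓ/2)(s + 1/2)) · 1_{[sℓ/2, (s+1)ℓ/2)}(x₁): the quantity S(ℓ) := Σ_{k ∈ {0,…,ℓ⁻¹−1}³} [ Var_{B_{ℓ,k}}(u) + Var_{B_{ℓ,k}^{shift}}(u) ] satisfies | S(ℓ) − (π²ℓ²/8) · Var_{[0,1]³}(u) | ≤ C ℓ³ · Var_{[0,1]³}(u). In particular the constant (1−cos πℓ)/(4+1−cos πℓ) in the two-partition localization inequality is optimal to leading order as ℓ → 0. -/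
open MeasureTheory Real

/-- Average of `f` over `A` w.r.t. Lebesgue measure. -/
noncomputable def avg (A : Set (Fin 3 → ℝ)) (f : (Fin 3 → ℝ) → ℝ) : ℝ :=
  ((volume A).toReal)⁻¹ * ∫ x in A, f x

/-- `Var_A(f) = ∫_A |f - ⟨f⟩_A|²`. -/
noncomputable def Var (A : Set (Fin 3 → ℝ)) (f : (Fin 3 → ℝ) → ℝ) : ℝ :=
  ∫ x in A, (f x - avg A f) ^ 2

/-- The cube `B_{ℓ,k} = ∏_i [k_i ℓ, (k_i+1) ℓ]`. -/
def B (ℓ : ℝ) (k : Fin 3 → ℕ) : Set (Fin 3 → ℝ) :=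
  Set.Icc (fun i => (k i : ℝ) * ℓ) (fun i => ((k i : ℝ) + 1) * ℓ)

/-- The shifted box `B_{ℓ,k}^{shift}` for the partition of `[0,1]³` into `m³` boxes. -/
def Bshift (ℓ : ℝ) (m : ℕ) (k : Fin 3 → ℕ) : Set (Fin 3 → ℝ) :=
  Set.Icc (fun i => ((k i : ℝ) + if 0 < k i then (1 : ℝ) / 2 else 0) * ℓ)
    (fun i => ((k i : ℝ) + 1 + if k i < m - 1 then (1 : ℝ) / 2 else 0) * ℓ)

/-- The step function
`u(x) = Σ_{s=0}^{2ℓ⁻¹−1} cos((πℓ/2)(s+1/2)) 1_{[sℓ/2,(s+1)ℓ/2)}(x₁)`. -/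
noncomputable def stepFn (ℓ : ℝ) (m : ℕ) (x : Fin 3 → ℝ) : ℝ :=
  ∑ s ∈ Finset.range (2 * m),
    if x 0 ∈ Set.Ico ((s : ℝ) * ℓ / 2) (((s : ℝ) + 1) * ℓ / 2) then
      Real.cos (π * ℓ / 2 * ((s : ℝ) + 1 / 2))
    else 0

noncomputable def c (ℓ : ℝ) (s : ℕ) : ℝ := Real.cos (π * ℓ / 2 * ((s : ℝ) + 1 / 2))

noncomputable def g (ℓ : ℝ) (m : ℕ) (t : ℝ) : ℝ :=
  ∑ s ∈ Finset.range (2 * m),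
    if t ∈ Set.Ico ((s : ℝ) * ℓ / 2) (((s : ℝ) + 1) * ℓ / 2) then c ℓ s else 0

noncomputable def avg1 (A : Set ℝ) (f : ℝ → ℝ) : ℝ :=
  ((volume A).toReal)⁻¹ * ∫ t in A, f t

noncomputable def Var1 (A : Set ℝ) (f : ℝ → ℝ) : ℝ :=
  ∫ t in A, (f t - avg1 A f) ^ 2

noncomputable def V1s (ℓ : ℝ) (m : ℕ) (j : ℕ) : ℝ :=
  Var1 (Set.Icc (((j : ℝ) + if 0 < j then (1:ℝ)/2 else 0) * ℓ)
    (((j : ℝ) + 1 + if j < m - 1 then (1:ℝ)/2 else 0) * ℓ)) (g ℓ m)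

lemma abs_c_le (ℓ : ℝ) (s : ℕ) : |c ℓ s| ≤ 1 := Real.abs_cos_le_one _

lemma g_eq (hl : 0 < ℓ) {m s : ℕ} (hs : s < 2 * m) {t : ℝ}
    (ht : t ∈ Set.Ico ((s : ℝ) * ℓ / 2) (((s : ℝ) + 1) * ℓ / 2)) : g ℓ m t = c ℓ s := by
  rw [g]
  rw [Finset.sum_eq_single s]
  · simp [ht]
  · intro s' _ hne
    rw [if_neg]
    intro ht'
    apply hne
    obtain ⟨h1, h2⟩ := ht
    obtain ⟨h1', h2'⟩ := ht'
    have e1 : (s' : ℝ) < s + 1 := by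
      have := lt_of_le_of_lt h1' h2
      rw [div_lt_div_iff_of_pos_right two_pos] at this
      exact lt_of_mul_lt_mul_right this hl.le
    have e2 : (s : ℝ) < s' + 1 := by
      have := lt_of_le_of_lt h1 h2'
      rw [div_lt_div_iff_of_pos_right two_pos] at this
      exact lt_of_mul_lt_mul_right this hl.le
    have : s' < s + 1 := by exact_mod_cast e1
    have : s < s' + 1 := by exact_mod_cast e2
    omega
  · intro h; exact absurd (Finset.mem_range.2 hs) h

lemma g_integrable (ℓ : ℝ) (m : ℕ) : Integrable (g ℓ m) := by
  apply integrable_finset_sum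
  intro s _
  have : (fun t : ℝ => if t ∈ Set.Ico ((s : ℝ) * ℓ / 2) (((s : ℝ) + 1) * ℓ / 2) then c ℓ s else 0)
      = Set.indicator (Set.Ico ((s : ℝ) * ℓ / 2) (((s : ℝ) + 1) * ℓ / 2)) (fun _ => c ℓ s) := by
    funext t; simp [Set.indicator]
  rw [this]
  rw [integrable_indicator_iff measurableSet_Ico]
  exact integrableOn_const (by rw [Real.volume_Ico]; exact ENNReal.ofReal_ne_top)

lemma g_sq_integrable (ℓ : ℝ) (m : ℕ) : Integrable (fun t => g ℓ m t ^ 2) := by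
  have h := (g_integrable ℓ m).bdd_mul (c := 2 * m) (g_integrable ℓ m).1
    (Filter.Eventually.of_forall fun t => ?_)
  · simpa [pow_two] using h
  · rw [g, Real.norm_eq_abs]
    calc |∑ s ∈ Finset.range (2 * m), _| ≤ ∑ s ∈ Finset.range (2 * m), (1:ℝ) := by
          apply (Finset.abs_sum_le_sum_abs _ _).trans
          apply Finset.sum_le_sum
          intro s _
          split
          · exact abs_c_le ℓ s
          · simp
      _ = 2 * m := by simp

lemma step_integral {ℓ : ℝ} (hl : 0 < ℓ) {m s : ℕ} (hs : s < 2 * m) (f : ℝ → ℝ) :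
    ∫ t in Set.Ioc ((s : ℝ) * ℓ / 2) (((s : ℝ) + 1) * ℓ / 2), f (g ℓ m t)
      = ℓ / 2 * f (c ℓ s) := by
  have hb : ∀ᵐ t : ℝ, t ≠ ((s : ℝ) + 1) * ℓ / 2 := by
    rw [MeasureTheory.ae_iff]
    simp only [ne_eq, not_not, Set.setOf_eq_eq_singleton]
    exact Real.volume_singleton
  have hcong : ∀ᵐ t : ℝ, t ∈ Set.Ioc ((s : ℝ) * ℓ / 2) (((s : ℝ) + 1) * ℓ / 2) →
      f (g ℓ m t) = f (c ℓ s) := by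
    filter_upwards [hb] with t ht hmem
    rw [g_eq hl hs ⟨hmem.1.le, lt_of_le_of_ne hmem.2 ht⟩]
  rw [MeasureTheory.setIntegral_congr_ae measurableSet_Ioc hcong]
  rw [MeasureTheory.setIntegral_const, Real.volume_real_Ioc,
    show ((s : ℝ) + 1) * ℓ / 2 - (s : ℝ) * ℓ / 2 = ℓ / 2 by ring,
    max_eq_left (by positivity), smul_eq_mul]

lemma blocks_integral {ℓ : ℝ} (hl : 0 < ℓ) {m : ℕ} (p n : ℕ) (hpn : p + n ≤ 2 * m) (f : ℝ → ℝ)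
    (Hf : ∀ A B : ℝ, IntegrableOn (fun t => f (g ℓ m t)) (Set.Ioc A B) volume) :
    ∫ t in Set.Ioc ((p : ℝ) * ℓ / 2) (((p : ℝ) + n) * ℓ / 2), f (g ℓ m t)
      = ℓ / 2 * ∑ j ∈ Finset.range n, f (c ℓ (p + j)) := by
  set F := fun t => f (g ℓ m t) with hF
  set aseq : ℕ → ℝ := fun j => ((p : ℝ) + j) * ℓ / 2 with ha
  have hmono : ∀ j k : ℕ, j ≤ k → aseq j ≤ aseq k := by
    intro j k hjk
    have : (j : ℝ) ≤ k := by exact_mod_cast hjk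
    simp only [ha]
    have := hl.le
    nlinarith
  have hii : ∀ k, k < n → IntervalIntegrable F volume (aseq k) (aseq (k + 1)) := by
    intro k _
    rw [intervalIntegrable_iff]
    exact Hf _ _
  have hsum := intervalIntegral.sum_integral_adjacent_intervals (μ := volume) (a := aseq)
      (f := F) hii
  have hstep : ∀ k ∈ Finset.range n, (∫ t in (aseq k)..(aseq (k+1)), F t)
      = ℓ / 2 * f (c ℓ (p + k)) := by
    intro k hk
    rw [Finset.mem_range] at hk
    rw [intervalIntegral.integral_of_le (hmono k (k+1) (Nat.le_succ k))]
    have : aseq k = ((p + k : ℕ) : ℝ) * ℓ / 2 := by push_cast [ha]; ring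
    have h2 : aseq (k + 1) = (((p + k : ℕ) : ℝ) + 1) * ℓ / 2 := by push_cast [ha]; ring
    rw [this, h2]
    exact step_integral hl (by omega : p + k < 2 * m) f
  rw [Finset.sum_congr rfl hstep] at hsum
  rw [← Finset.mul_sum] at hsum
  have h0 : aseq 0 = (p : ℝ) * ℓ / 2 := by simp [ha]
  have hn' : aseq n = ((p : ℝ) + n) * ℓ / 2 := rfl
  rw [h0, hn'] at hsum
  rw [hsum, intervalIntegral.integral_of_le (by rw [← h0, ← hn']; exact hmono 0 n (Nat.zero_le n))]

lemma sq_shift_integrableOn (ℓ : ℝ) (m : ℕ) (r : ℝ) (A B : ℝ) :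
    IntegrableOn (fun t => (g ℓ m t - r) ^ 2) (Set.Ioc A B) volume := by
  have h1 : (fun t => (g ℓ m t - r) ^ 2)
      = fun t => (g ℓ m t ^ 2 - (2 * r) * g ℓ m t) + r ^ 2 := by
    funext t; ring
  rw [h1]
  apply Integrable.add
  · exact ((g_sq_integrable ℓ m).sub ((g_integrable ℓ m).const_mul (2 * r))).integrableOn
  · exact integrableOn_const (by rw [Real.volume_Ioc]; exact ENNReal.ofReal_ne_top)

lemma avg1_blocks {ℓ : ℝ} (hl : 0 < ℓ) {m : ℕ} (p n : ℕ) (hn : 0 < n) (hpn : p + n ≤ 2 * m) :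
    avg1 (Set.Icc ((p : ℝ) * ℓ / 2) (((p : ℝ) + n) * ℓ / 2)) (g ℓ m)
      = (∑ j ∈ Finset.range n, c ℓ (p + j)) / n := by
  rw [avg1, MeasureTheory.integral_Icc_eq_integral_Ioc]
  have := blocks_integral hl p n hpn (fun u => u) (fun A B => (g_integrable ℓ m).integrableOn)
  rw [this, Real.volume_Icc,
    show ((p : ℝ) + n) * ℓ / 2 - (p : ℝ) * ℓ / 2 = n * (ℓ / 2) by ring,
    ENNReal.toReal_ofReal (by positivity)]
  have hn' : (0:ℝ) < n := by exact_mod_cast hn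
  field_simp

lemma Var1_blocks {ℓ : ℝ} (hl : 0 < ℓ) {m : ℕ} (p n : ℕ) (hn : 0 < n) (hpn : p + n ≤ 2 * m) :
    Var1 (Set.Icc ((p : ℝ) * ℓ / 2) (((p : ℝ) + n) * ℓ / 2)) (g ℓ m)
      = ℓ / 2 * ∑ j ∈ Finset.range n,
          (c ℓ (p + j) - (∑ i ∈ Finset.range n, c ℓ (p + i)) / n) ^ 2 := by
  rw [Var1, avg1_blocks hl p n hn hpn, MeasureTheory.integral_Icc_eq_integral_Ioc]
  exact blocks_integral hl p n hpn
    (fun u => (u - (∑ i ∈ Finset.range n, c ℓ (p + i)) / n) ^ 2)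
    (fun A B => sq_shift_integrableOn ℓ m _ A B)

lemma integral_box (a b : Fin 3 → ℝ) (f : ℝ → ℝ) :
    ∫ x in Set.Icc a b, f (x 0)
      = (∫ t in Set.Icc (a 0) (b 0), f t) * (volume (Set.Icc (a 1) (b 1))).toReal
          * (volume (Set.Icc (a 2) (b 2))).toReal := by
  rw [← MeasureTheory.integral_indicator measurableSet_Icc]
  set F : Fin 3 → ℝ → ℝ :=
    fun i => Set.indicator (Set.Icc (a i) (b i)) (fun u => if i = 0 then f u else 1) with hF
  have key : ∀ x : Fin 3 → ℝ,
      (Set.Icc a b).indicator (fun x => f (x 0)) x = ∏ i : Fin 3, F i (x i) := by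
    intro x
    by_cases hx : x ∈ Set.Icc a b
    · rw [Set.indicator_of_mem hx]
      have hxi : ∀ i, x i ∈ Set.Icc (a i) (b i) := fun i => ⟨hx.1 i, hx.2 i⟩
      rw [Fin.prod_univ_three]
      simp only [hF, Set.indicator_of_mem (hxi 0), Set.indicator_of_mem (hxi 1),
        Set.indicator_of_mem (hxi 2)]
      simp [show (1:Fin 3) ≠ 0 by decide, show (2:Fin 3) ≠ 0 by decide]
    · rw [Set.indicator_of_notMem hx]
      have : ∃ i, x i ∉ Set.Icc (a i) (b i) := by
        by_contra h
        push_neg at h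
        exact hx ⟨fun i => (h i).1, fun i => (h i).2⟩
      obtain ⟨i, hi⟩ := this
      rw [eq_comm]
      apply Finset.prod_eq_zero (Finset.mem_univ i)
      simp only [hF, Set.indicator_of_notMem hi]
  rw [show ((Set.Icc a b).indicator fun x => f (x 0)) = fun x => ∏ i : Fin 3, F i (x i) from
    funext key]
  beta_reduce
  rw [MeasureTheory.volume_pi, MeasureTheory.integral_fintype_prod_eq_prod F]
  rw [Fin.prod_univ_three]
  simp only [hF]
  rw [MeasureTheory.integral_indicator measurableSet_Icc,
    MeasureTheory.integral_indicator measurableSet_Icc,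
    MeasureTheory.integral_indicator measurableSet_Icc]
  simp [show (1:Fin 3) ≠ 0 by decide, show (2:Fin 3) ≠ 0 by decide,
    MeasureTheory.setIntegral_const, smul_eq_mul]
  rw [ENNReal.toReal_ofReal', ENNReal.toReal_ofReal']

lemma vol_box (a b : Fin 3 → ℝ) (h : ∀ i, a i < b i) :
    (volume (Set.Icc a b)).toReal = (b 0 - a 0) * (b 1 - a 1) * (b 2 - a 2) := by
  rw [Real.volume_Icc_pi_toReal (fun i => (h i).le)]
  rw [Fin.prod_univ_three]

lemma avg_box (a b : Fin 3 → ℝ) (h : ∀ i, a i < b i) (f : ℝ → ℝ) :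
    avg (Set.Icc a b) (fun x => f (x 0)) = avg1 (Set.Icc (a 0) (b 0)) f := by
  rw [avg, avg1, integral_box, vol_box a b h, Real.volume_Icc, Real.volume_Icc, Real.volume_Icc,
    ENNReal.toReal_ofReal (by linarith [h 1] : (0:ℝ) ≤ b 1 - a 1),
    ENNReal.toReal_ofReal (by linarith [h 2] : (0:ℝ) ≤ b 2 - a 2),
    ENNReal.toReal_ofReal (by linarith [h 0] : (0:ℝ) ≤ b 0 - a 0)]
  have h0 : b 0 - a 0 ≠ 0 := sub_ne_zero.2 (h 0).ne'
  have h1 : b 1 - a 1 ≠ 0 := sub_ne_zero.2 (h 1).ne'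
  have h2 : b 2 - a 2 ≠ 0 := sub_ne_zero.2 (h 2).ne'
  set I := ∫ t in Set.Icc (a 0) (b 0), f t
  set L0 := b 0 - a 0
  set L1 := b 1 - a 1
  set L2 := b 2 - a 2
  field_simp

lemma Var_box (a b : Fin 3 → ℝ) (h : ∀ i, a i < b i) (f : ℝ → ℝ) :
    Var (Set.Icc a b) (fun x => f (x 0))
      = (b 1 - a 1) * (b 2 - a 2) * Var1 (Set.Icc (a 0) (b 0)) f := by
  rw [Var, Var1, avg_box a b h f]
  have hib := integral_box a b (fun t => (f t - avg1 (Set.Icc (a 0) (b 0)) f) ^ 2)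
  rw [Real.volume_Icc, Real.volume_Icc,
    ENNReal.toReal_ofReal (by linarith [h 1] : (0:ℝ) ≤ b 1 - a 1),
    ENNReal.toReal_ofReal (by linarith [h 2] : (0:ℝ) ≤ b 2 - a 2)] at hib
  exact hib.trans (by ring)

lemma tele1 (θ : ℝ) (n : ℕ) :
    2 * Real.sin θ * ∑ s ∈ Finset.range n, Real.cos ((2 * (s : ℝ) + 1) * θ)
      = Real.sin (2 * (n : ℝ) * θ) := by
  have key : ∀ s : ℕ, Real.sin (2 * ((s : ℝ) + 1) * θ) - Real.sin (2 * (s : ℝ) * θ)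
      = 2 * Real.sin θ * Real.cos ((2 * (s : ℝ) + 1) * θ) := by
    intro s
    rw [Real.sin_sub_sin]
    ring_nf
  calc 2 * Real.sin θ * ∑ s ∈ Finset.range n, Real.cos ((2 * (s : ℝ) + 1) * θ)
      = ∑ s ∈ Finset.range n,
          (Real.sin (2 * ((s : ℝ) + 1) * θ) - Real.sin (2 * (s : ℝ) * θ)) := by
        rw [Finset.mul_sum]; exact Finset.sum_congr rfl fun s _ => (key s).symm
    _ = Real.sin (2 * (n : ℝ) * θ) := by
        have := Finset.sum_range_sub (f := fun s : ℕ => Real.sin (2 * (s : ℝ) * θ)) n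
        simp only [Nat.cast_add, Nat.cast_one] at this ⊢
        rw [this]
        simp

lemma tele2 (θ : ℝ) (n : ℕ) :
    2 * Real.sin θ * ∑ j ∈ Finset.range n, Real.cos (2 * (j : ℝ) * θ)
      = Real.sin ((2 * (n : ℝ) - 1) * θ) + Real.sin θ := by
  have key : ∀ j : ℕ, Real.sin ((2 * ((j : ℝ) + 1) - 1) * θ) - Real.sin ((2 * (j : ℝ) - 1) * θ)
      = 2 * Real.sin θ * Real.cos (2 * (j : ℝ) * θ) := by
    intro j
    rw [Real.sin_sub_sin]
    ring_nf
  calc 2 * Real.sin θ * ∑ j ∈ Finset.range n, Real.cos (2 * (j : ℝ) * θ)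
      = ∑ j ∈ Finset.range n, (Real.sin ((2 * ((j : ℝ) + 1) - 1) * θ)
          - Real.sin ((2 * (j : ℝ) - 1) * θ)) := by
        rw [Finset.mul_sum]; exact Finset.sum_congr rfl fun j _ => (key j).symm
    _ = Real.sin ((2 * (n : ℝ) - 1) * θ) + Real.sin θ := by
        have := Finset.sum_range_sub (f := fun j : ℕ => Real.sin ((2 * (j : ℝ) - 1) * θ)) n
        simp only [Nat.cast_add, Nat.cast_one] at this ⊢
        rw [this]
        norm_num

section
variable {ℓ : ℝ} {m : ℕ}

lemma hml (hm : 1 ≤ m) (hℓ : ℓ = (m : ℝ)⁻¹) : (m : ℝ) * ℓ = 1 := by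
  have : (m : ℝ) ≠ 0 := by positivity
  rw [hℓ]; field_simp

lemma hlpos (hm : 1 ≤ m) (hℓ : ℓ = (m : ℝ)⁻¹) : 0 < ℓ := by
  have : (0:ℝ) < m := by exact_mod_cast hm
  rw [hℓ]; positivity

lemma hlle (hm : 1 ≤ m) (hℓ : ℓ = (m : ℝ)⁻¹) : ℓ ≤ 1 := by
  have h1 : (1:ℝ) ≤ m := by exact_mod_cast hm
  rw [hℓ]
  rw [inv_le_one_iff₀]
  right; exact h1

lemma sin_pos_aux (hm : 1 ≤ m) (hℓ : ℓ = (m : ℝ)⁻¹) {r : ℝ} (hr : 0 < r) (hr2 : r ≤ 1/2) :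
    0 < Real.sin (π * ℓ * r) := by
  have hl := hlpos hm hℓ
  have hle := hlle hm hℓ
  apply Real.sin_pos_of_pos_of_lt_pi
  · positivity
  · nlinarith [Real.pi_pos, mul_nonneg (sub_nonneg.2 hle) hr.le,
      mul_nonneg hl.le (sub_nonneg.2 hr2)]

lemma trigA (hm : 1 ≤ m) (hℓ : ℓ = (m : ℝ)⁻¹) : ∑ s ∈ Finset.range (2 * m), c ℓ s = 0 := by
  have h := tele1 (π * ℓ / 4) (2 * m)
  have harg : ∀ s : ℕ, (2 * (s : ℝ) + 1) * (π * ℓ / 4) = π * ℓ / 2 * ((s : ℝ) + 1/2) := by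
    intro s; ring
  simp only [harg] at h
  have hsin : Real.sin (2 * ((2 * m : ℕ) : ℝ) * (π * ℓ / 4)) = 0 := by
    push_cast
    rw [show 2 * (2 * (m:ℝ)) * (π * ℓ / 4) = π * ((m:ℝ) * ℓ) by ring, hml hm hℓ]
    simp
  have hs : 0 < Real.sin (π * ℓ / 4) := by
    have := sin_pos_aux hm hℓ (by norm_num : (0:ℝ) < 1/4) (by norm_num)
    rwa [show π * ℓ * (1/4) = π * ℓ / 4 by ring] at this
  rw [hsin] at h
  rcases mul_eq_zero.1 h with h' | h'
  · exfalso; linarith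
  · simpa [c] using h'

lemma trigB (hm : 1 ≤ m) (hℓ : ℓ = (m : ℝ)⁻¹) :
    ∑ s ∈ Finset.range (2 * m), (c ℓ s) ^ 2 = m := by
  have h := tele1 (π * ℓ / 2) (2 * m)
  have hsin : Real.sin (2 * ((2 * m : ℕ) : ℝ) * (π * ℓ / 2)) = 0 := by
    push_cast
    rw [show 2 * (2 * (m:ℝ)) * (π * ℓ / 2) = 2 * π * ((m:ℝ) * ℓ) by ring, hml hm hℓ]
    simp [Real.sin_two_pi]
  have hs : 0 < Real.sin (π * ℓ / 2) := by
    have := sin_pos_aux hm hℓ (by norm_num : (0:ℝ) < 1/2) (by norm_num)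
    rwa [show π * ℓ * (1/2) = π * ℓ / 2 by ring] at this
  rw [hsin] at h
  have hzero : ∑ s ∈ Finset.range (2 * m), Real.cos ((2 * (s : ℝ) + 1) * (π * ℓ / 2)) = 0 := by
    rcases mul_eq_zero.1 h with h' | h'
    · exfalso; linarith
    · exact h'
  have hc : ∀ s : ℕ, (c ℓ s) ^ 2 = 1/2 + Real.cos ((2 * (s : ℝ) + 1) * (π * ℓ / 2)) / 2 := by
    intro s
    rw [c, Real.cos_sq]
    congr 2
    ring
  rw [Finset.sum_congr rfl fun s _ => hc s, Finset.sum_add_distrib, Finset.sum_const,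
    ← Finset.sum_div, hzero, Finset.card_range]
  push_cast
  ring

lemma trigC (hm : 2 ≤ m) (hℓ : ℓ = (m : ℝ)⁻¹) :
    ∑ k ∈ Finset.range m, Real.sin (π * ℓ * ((k : ℝ) + 1/2)) ^ 2 = (m : ℝ) / 2 := by
  have hm1 : 1 ≤ m := by omega
  have h := tele1 (π * ℓ) m
  have hsin : Real.sin (2 * (m : ℝ) * (π * ℓ)) = 0 := by
    rw [show 2 * (m:ℝ) * (π * ℓ) = 2 * π * ((m:ℝ) * ℓ) by ring, hml hm1 hℓ]
    simp [Real.sin_two_pi]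
  have hs : 0 < Real.sin (π * ℓ) := by
    have hl := hlpos hm1 hℓ
    apply Real.sin_pos_of_pos_of_lt_pi
    · positivity
    · have h2 : (2:ℝ) ≤ m := by exact_mod_cast hm
      have : ℓ ≤ 1/2 := by
        rw [hℓ]
        rw [inv_le_comm₀ (by linarith) (by norm_num)]
        linarith
      nlinarith [Real.pi_pos]
  rw [hsin] at h
  have hzero : ∑ k ∈ Finset.range m, Real.cos ((2 * (k : ℝ) + 1) * (π * ℓ)) = 0 := by
    rcases mul_eq_zero.1 h with h' | h'
    · exfalso; linarith
    · exact h'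
  have hc : ∀ k : ℕ, Real.sin (π * ℓ * ((k : ℝ) + 1/2)) ^ 2
      = 1/2 - Real.cos ((2 * (k : ℝ) + 1) * (π * ℓ)) / 2 := by
    intro k
    rw [Real.sin_sq_eq_half_sub]
    congr 2
    ring
  rw [Finset.sum_congr rfl fun k _ => hc k, Finset.sum_sub_distrib, Finset.sum_const,
    ← Finset.sum_div, hzero, Finset.card_range]
  push_cast
  ring

lemma trigD (hm : 2 ≤ m) (hℓ : ℓ = (m : ℝ)⁻¹) :
    ∑ j ∈ Finset.range m, Real.sin (π * ℓ * (j : ℝ)) ^ 2 = (m : ℝ) / 2 := by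
  have hm1 : 1 ≤ m := by omega
  have h := tele2 (π * ℓ) m
  have hs : 0 < Real.sin (π * ℓ) := by
    have hl := hlpos hm1 hℓ
    apply Real.sin_pos_of_pos_of_lt_pi
    · positivity
    · have h2 : (2:ℝ) ≤ m := by exact_mod_cast hm
      have : ℓ ≤ 1/2 := by
        rw [hℓ, inv_le_comm₀ (by linarith) (by norm_num)]
        linarith
      nlinarith [Real.pi_pos]
  have hsin : Real.sin ((2 * (m : ℝ) - 1) * (π * ℓ)) + Real.sin (π * ℓ) = 0 := by
    have : (2 * (m : ℝ) - 1) * (π * ℓ) = 2 * π * ((m:ℝ) * ℓ) - π * ℓ := by ring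
    rw [this, hml hm1 hℓ]
    rw [show 2 * π * 1 - π * ℓ = 2 * π - π * ℓ by ring]
    rw [Real.sin_sub]
    simp [Real.sin_two_pi, Real.cos_two_pi]
  rw [hsin] at h
  have hzero : ∑ j ∈ Finset.range m, Real.cos (2 * (j : ℝ) * (π * ℓ)) = 0 := by
    rcases mul_eq_zero.1 h with h' | h'
    · exfalso; linarith
    · exact h'
  have hc : ∀ j : ℕ, Real.sin (π * ℓ * (j : ℝ)) ^ 2
      = 1/2 - Real.cos (2 * (j : ℝ) * (π * ℓ)) / 2 := by
    intro j
    rw [Real.sin_sq_eq_half_sub]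
    congr 2
    ring
  rw [Finset.sum_congr rfl fun j _ => hc j, Finset.sum_sub_distrib, Finset.sum_const,
    ← Finset.sum_div, hzero, Finset.card_range]
  push_cast
  ring

lemma cos_diff_id (u v : ℝ) :
    Real.cos (v - u) - Real.cos (v + u) = 2 * Real.sin u * Real.sin v := by
  rw [Real.cos_sub, Real.cos_add]
  ring

lemma cdiff1 (ℓ : ℝ) (k : ℕ) : c ℓ (2 * k) - c ℓ (2 * k + 1)
    = 2 * Real.sin (π * ℓ / 4) * Real.sin (π * ℓ * ((k : ℝ) + 1/2)) := by
  have h1 : c ℓ (2 * k) = Real.cos (π * ℓ * ((k : ℝ) + 1/2) - π * ℓ / 4) := by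
    rw [c]; congr 1; push_cast; ring
  have h2 : c ℓ (2 * k + 1) = Real.cos (π * ℓ * ((k : ℝ) + 1/2) + π * ℓ / 4) := by
    rw [c]; congr 1; push_cast; ring
  rw [h1, h2, cos_diff_id]

lemma cdiff2 (ℓ : ℝ) (k : ℕ) : c ℓ (2 * k + 1) - c ℓ (2 * k + 2)
    = 2 * Real.sin (π * ℓ / 4) * Real.sin (π * ℓ * ((k : ℝ) + 1)) := by
  have h1 : c ℓ (2 * k + 1) = Real.cos (π * ℓ * ((k : ℝ) + 1) - π * ℓ / 4) := by
    rw [c]; congr 1; push_cast; ring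
  have h2 : c ℓ (2 * k + 2) = Real.cos (π * ℓ * ((k : ℝ) + 1) + π * ℓ / 4) := by
    rw [c]; congr 1; push_cast; ring
  rw [h1, h2, cos_diff_id]

end

section
variable {ℓ : ℝ} {m : ℕ}

lemma Var1_two {ℓ : ℝ} (hl : 0 < ℓ) {m : ℕ} (p : ℕ) (hpn : p + 2 ≤ 2 * m) :
    Var1 (Set.Icc ((p : ℝ) * ℓ / 2) (((p : ℝ) + 2) * ℓ / 2)) (g ℓ m)
      = ℓ / 4 * (c ℓ p - c ℓ (p + 1)) ^ 2 := by
  have h := Var1_blocks hl (m := m) p 2 (by norm_num) hpn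
  push_cast at h
  rw [h]
  rw [Finset.sum_range_succ, Finset.sum_range_succ, Finset.sum_range_zero,
    Finset.sum_range_succ, Finset.sum_range_succ, Finset.sum_range_zero]
  push_cast
  ring

lemma Var1_one {ℓ : ℝ} (hl : 0 < ℓ) {m : ℕ} (p : ℕ) (hpn : p + 1 ≤ 2 * m) :
    Var1 (Set.Icc ((p : ℝ) * ℓ / 2) (((p : ℝ) + 1) * ℓ / 2)) (g ℓ m) = 0 := by
  have h := Var1_blocks hl (m := m) p 1 (by norm_num) hpn
  push_cast at h
  rw [h]
  rw [Finset.sum_range_succ, Finset.sum_range_zero, Finset.sum_range_succ,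
    Finset.sum_range_zero]
  push_cast
  ring

lemma Var1_three {ℓ : ℝ} (hl : 0 < ℓ) {m : ℕ} (hm : 2 ≤ m) :
    Var1 (Set.Icc ((0 : ℝ) * ℓ / 2) (((0 : ℝ) + 3) * ℓ / 2)) (g ℓ m)
      = ℓ / 6 * ((c ℓ 0 - c ℓ 1) ^ 2 + (c ℓ 1 - c ℓ 2) ^ 2 + (c ℓ 0 - c ℓ 2) ^ 2) := by
  have h := Var1_blocks hl (m := m) 0 3 (by norm_num) (by omega)
  push_cast at h
  rw [h]
  rw [Finset.sum_range_succ, Finset.sum_range_succ, Finset.sum_range_succ,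
    Finset.sum_range_zero, Finset.sum_range_succ, Finset.sum_range_succ,
    Finset.sum_range_succ, Finset.sum_range_zero]
  norm_num
  ring

lemma Var1_tot (hm : 1 ≤ m) (hℓ : ℓ = (m : ℝ)⁻¹) :
    Var1 (Set.Icc (0 : ℝ) 1) (g ℓ m) = 1 / 2 := by
  have hl := hlpos hm hℓ
  have e2 : (((0:ℕ) : ℝ) + ((2 * m : ℕ) : ℝ)) * ℓ / 2 = 1 := by
    push_cast
    rw [show ((0:ℝ) + 2 * (m:ℝ)) * ℓ / 2 = (m : ℝ) * ℓ by ring, hml hm hℓ]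
  have h := Var1_blocks hl (m := m) 0 (2 * m) (by omega) (by omega)
  rw [show (((0:ℕ) : ℝ) * ℓ / 2) = 0 by norm_num, e2] at h
  rw [h]
  have hz : ∑ i ∈ Finset.range (2 * m), c ℓ (0 + i) = 0 := by
    simpa using trigA hm hℓ
  rw [hz]
  simp only [zero_div, sub_zero, zero_add]
  rw [trigB hm hℓ, show ℓ / 2 * (m : ℝ) = (m : ℝ) * ℓ / 2 by ring, hml hm hℓ]

end

section
variable {ℓ : ℝ} {m : ℕ}

lemma VarB_j (hm : 1 ≤ m) (hℓ : ℓ = (m : ℝ)⁻¹) {j : ℕ} (hj : j < m) :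
    Var1 (Set.Icc ((j : ℝ) * ℓ) (((j : ℝ) + 1) * ℓ)) (g ℓ m)
      = ℓ * Real.sin (π * ℓ / 4) ^ 2 * Real.sin (π * ℓ * ((j : ℝ) + 1/2)) ^ 2 := by
  have hl := hlpos hm hℓ
  have hset : Set.Icc ((j : ℝ) * ℓ) (((j : ℝ) + 1) * ℓ)
      = Set.Icc (((2 * j : ℕ) : ℝ) * ℓ / 2) ((((2 * j : ℕ) : ℝ) + 2) * ℓ / 2) := by
    congr 1 <;> push_cast <;> ring
  rw [hset, Var1_two hl (2 * j) (by omega), cdiff1]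
  ring

lemma sumB1D (hm : 2 ≤ m) (hℓ : ℓ = (m : ℝ)⁻¹) :
    ∑ j ∈ Finset.range m, Var1 (Set.Icc ((j : ℝ) * ℓ) (((j : ℝ) + 1) * ℓ)) (g ℓ m)
      = ℓ * Real.sin (π * ℓ / 4) ^ 2 * ((m : ℝ) / 2) := by
  have h1 : ∀ j ∈ Finset.range m,
      Var1 (Set.Icc ((j : ℝ) * ℓ) (((j : ℝ) + 1) * ℓ)) (g ℓ m)
        = ℓ * Real.sin (π * ℓ / 4) ^ 2 * Real.sin (π * ℓ * ((j : ℝ) + 1/2)) ^ 2 := by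
    intro j hj
    exact VarB_j (by omega) hℓ (Finset.mem_range.1 hj)
  rw [Finset.sum_congr rfl h1, ← Finset.mul_sum, trigC hm hℓ]


lemma V1s_mid (hm : 1 ≤ m) (hℓ : ℓ = (m : ℝ)⁻¹) {j : ℕ} (h0 : 0 < j) (h1 : j < m - 1) :
    V1s ℓ m j = ℓ * Real.sin (π * ℓ / 4) ^ 2 * Real.sin (π * ℓ * ((j : ℝ) + 1)) ^ 2 := by
  have hl := hlpos hm hℓ
  rw [V1s, if_pos h0, if_pos h1]
  have hset : Set.Icc (((j : ℝ) + 1/2) * ℓ) (((j : ℝ) + 1 + 1/2) * ℓ)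
      = Set.Icc (((2 * j + 1 : ℕ) : ℝ) * ℓ / 2) ((((2 * j + 1 : ℕ) : ℝ) + 2) * ℓ / 2) := by
    congr 1 <;> push_cast <;> ring
  rw [hset, Var1_two hl (2 * j + 1) (by omega)]
  rw [show 2 * j + 1 + 1 = 2 * j + 2 by ring, cdiff2]
  ring

lemma V1s_last (hm : 2 ≤ m) (hℓ : ℓ = (m : ℝ)⁻¹) : V1s ℓ m (m - 1) = 0 := by
  have hl := hlpos (by omega) hℓ
  rw [V1s, if_pos (by omega : 0 < m - 1), if_neg (by omega : ¬ (m - 1 < m - 1))]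
  have hset : Set.Icc ((((m - 1 : ℕ) : ℝ) + 1/2) * ℓ) ((((m - 1 : ℕ) : ℝ) + 1 + 0) * ℓ)
      = Set.Icc (((2 * m - 1 : ℕ) : ℝ) * ℓ / 2) ((((2 * m - 1 : ℕ) : ℝ) + 1) * ℓ / 2) := by
    have e1 : ((m - 1 : ℕ) : ℝ) = (m : ℝ) - 1 := by
      push_cast [Nat.cast_sub (by omega : 1 ≤ m)]; ring
    have e2 : ((2 * m - 1 : ℕ) : ℝ) = 2 * (m : ℝ) - 1 := by
      push_cast [Nat.cast_sub (by omega : 1 ≤ 2 * m)]; ring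
    rw [e1, e2]
    congr 1 <;> ring
  rw [hset, Var1_one hl (2 * m - 1) (by omega)]

lemma sumS1D (hm : 2 ≤ m) (hℓ : ℓ = (m : ℝ)⁻¹) :
    ∑ j ∈ Finset.range m, V1s ℓ m j
      = V1s ℓ m 0 + ℓ * Real.sin (π * ℓ / 4) ^ 2 * ((m : ℝ) / 2 - Real.sin (π * ℓ) ^ 2) := by
  obtain ⟨N, rfl⟩ : ∃ N, m = N + 2 := ⟨m - 2, by omega⟩
  have hlast : V1s ℓ (N + 2) (N + 1) = 0 := by
    have h := V1s_last hm hℓ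
    norm_num at h
    exact h
  have hmid : ∀ i ∈ Finset.range N, V1s ℓ (N + 2) (i + 1)
      = ℓ * Real.sin (π * ℓ / 4) ^ 2 * Real.sin (π * ℓ * ((i : ℝ) + 2)) ^ 2 := by
    intro i hi
    rw [Finset.mem_range] at hi
    have h := V1s_mid (m := N + 2) (by omega) hℓ (j := i + 1) (by omega) (by omega)
    rw [h]
    push_cast
    ring_nf
  have hD := trigD hm hℓ
  rw [Finset.sum_range_succ', Finset.sum_range_succ'] at hD
  push_cast at hD
  simp only [mul_zero, Real.sin_zero] at hD
  rw [Finset.sum_range_succ, Finset.sum_range_succ', hlast,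
    Finset.sum_congr rfl hmid, ← Finset.mul_sum]
  have hsum : ∑ i ∈ Finset.range N, Real.sin (π * ℓ * ((i : ℝ) + 2)) ^ 2
      = ((N : ℝ) + 2) / 2 - Real.sin (π * ℓ) ^ 2 := by
    have e : ∑ i ∈ Finset.range N, Real.sin (π * ℓ * ((i : ℝ) + 2)) ^ 2
        = ∑ i ∈ Finset.range N, Real.sin (π * ℓ * ((i : ℝ) + 1 + 1)) ^ 2 := by
      apply Finset.sum_congr rfl
      intro i _
      ring_nf
    rw [e]
    have e2 : Real.sin (π * ℓ * 1) ^ 2 = Real.sin (π * ℓ) ^ 2 := by norm_num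
    linarith [hD, e2]
  rw [hsum]
  push_cast
  ring
end

section
variable {ℓ : ℝ} {m : ℕ}

lemma step_eq (ℓ : ℝ) (m : ℕ) : stepFn ℓ m = fun x => g ℓ m (x 0) := rfl

lemma VarTot3D (hm : 1 ≤ m) (hℓ : ℓ = (m : ℝ)⁻¹) :
    Var (Set.Icc (0 : Fin 3 → ℝ) 1) (stepFn ℓ m) = 1 / 2 := by
  rw [step_eq]
  have h := Var_box 0 1 (fun i => by simp) (g ℓ m)
  simp only [Pi.one_apply, Pi.zero_apply] at h
  rw [h, Var1_tot hm hℓ]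
  norm_num

lemma sumB3D (hm : 2 ≤ m) (hℓ : ℓ = (m : ℝ)⁻¹) :
    ∑ k ∈ Fintype.piFinset (fun _ : Fin 3 => Finset.range m), Var (B ℓ k) (stepFn ℓ m)
      = Real.sin (π * ℓ / 4) ^ 2 / 2 := by
  have hl := hlpos (by omega : 1 ≤ m) hℓ
  set hB : Fin 3 → ℕ → ℝ := fun i j =>
    if i = 0 then Var1 (Set.Icc ((j : ℝ) * ℓ) (((j : ℝ) + 1) * ℓ)) (g ℓ m) else ℓ with hhB
  have hterm : ∀ k ∈ Fintype.piFinset (fun _ : Fin 3 => Finset.range m),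
      Var (B ℓ k) (stepFn ℓ m) = ∏ i, hB i (k i) := by
    intro k _
    rw [step_eq, B]
    have h := Var_box (fun i => (k i : ℝ) * ℓ) (fun i => ((k i : ℝ) + 1) * ℓ)
      (fun i => by nlinarith [hl]) (g ℓ m)
    rw [h, Fin.prod_univ_three]
    simp only [hhB, if_pos rfl, if_neg (by decide : ¬ (1 : Fin 3) = 0),
      if_neg (by decide : ¬ (2 : Fin 3) = 0)]
    ring
  rw [Finset.sum_congr rfl hterm, ← Finset.prod_univ_sum, Fin.prod_univ_three]
  simp only [hhB, if_pos rfl, if_neg (by decide : ¬ (1 : Fin 3) = 0),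
    if_neg (by decide : ¬ (2 : Fin 3) = 0)]
  rw [Finset.sum_const, Finset.card_range, nsmul_eq_mul, sumB1D hm hℓ]
  rw [show ℓ * Real.sin (π * ℓ / 4) ^ 2 * ((m : ℝ) / 2) * ((m : ℝ) * ℓ) * ((m : ℝ) * ℓ)
      = ((m : ℝ) * ℓ) * ((m : ℝ) * ℓ) * ((m : ℝ) * ℓ) * Real.sin (π * ℓ / 4) ^ 2 / 2 by ring,
    hml (by omega : 1 ≤ m) hℓ]
  ring

lemma sumS3D (hm : 2 ≤ m) (hℓ : ℓ = (m : ℝ)⁻¹) :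
    ∑ k ∈ Fintype.piFinset (fun _ : Fin 3 => Finset.range m), Var (Bshift ℓ m k) (stepFn ℓ m)
      = V1s ℓ m 0 + ℓ * Real.sin (π * ℓ / 4) ^ 2 * ((m : ℝ) / 2 - Real.sin (π * ℓ) ^ 2) := by
  have hl := hlpos (by omega : 1 ≤ m) hℓ
  have hlen : ∀ j : ℕ, ((j : ℝ) + if 0 < j then (1:ℝ)/2 else 0) * ℓ
      < ((j : ℝ) + 1 + if j < m - 1 then (1:ℝ)/2 else 0) * ℓ := by
    intro j
    have h1 : (if 0 < j then (1:ℝ)/2 else 0) ≤ 1/2 := by split <;> norm_num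
    have h2 : (0:ℝ) ≤ (if j < m - 1 then (1:ℝ)/2 else 0) := by split <;> norm_num
    nlinarith
  set hS : Fin 3 → ℕ → ℝ := fun i j =>
    if i = 0 then V1s ℓ m j
    else ((j : ℝ) + 1 + if j < m - 1 then (1:ℝ)/2 else 0) * ℓ
      - ((j : ℝ) + if 0 < j then (1:ℝ)/2 else 0) * ℓ with hhS
  have hterm : ∀ k ∈ Fintype.piFinset (fun _ : Fin 3 => Finset.range m),
      Var (Bshift ℓ m k) (stepFn ℓ m) = ∏ i, hS i (k i) := by
    intro k _
    rw [step_eq, Bshift]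
    have h := Var_box (fun i => ((k i : ℝ) + if 0 < k i then (1:ℝ)/2 else 0) * ℓ)
      (fun i => ((k i : ℝ) + 1 + if k i < m - 1 then (1:ℝ)/2 else 0) * ℓ)
      (fun i => hlen (k i)) (g ℓ m)
    rw [h, Fin.prod_univ_three]
    simp only [hhS, if_pos rfl, if_neg (by decide : ¬ (1 : Fin 3) = 0),
      if_neg (by decide : ¬ (2 : Fin 3) = 0)]
    rw [V1s]
    ring
  rw [Finset.sum_congr rfl hterm, ← Finset.prod_univ_sum, Fin.prod_univ_three]
  simp only [hhS, if_pos rfl, if_neg (by decide : ¬ (1 : Fin 3) = 0),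
    if_neg (by decide : ¬ (2 : Fin 3) = 0)]
  have hcross : ∑ j ∈ Finset.range m,
      (((j : ℝ) + 1 + if j < m - 1 then (1:ℝ)/2 else 0) * ℓ
        - ((j : ℝ) + if 0 < j then (1:ℝ)/2 else 0) * ℓ) = 1 := by
    have hterm2 : ∀ j ∈ Finset.range m,
        (((j : ℝ) + 1 + if j < m - 1 then (1:ℝ)/2 else 0) * ℓ
          - ((j : ℝ) + if 0 < j then (1:ℝ)/2 else 0) * ℓ)
        = ℓ + (if j < m - 1 then (1:ℝ)/2 else 0) * ℓ - (if 0 < j then (1:ℝ)/2 else 0) * ℓ := by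
      intro j _; ring
    rw [Finset.sum_congr rfl hterm2]
    rw [Finset.sum_sub_distrib, Finset.sum_add_distrib, Finset.sum_const, Finset.card_range,
      nsmul_eq_mul, ← Finset.sum_mul, ← Finset.sum_mul]
    have f1 : ∑ j ∈ Finset.range m, (if j < m - 1 then (1:ℝ)/2 else 0)
        = ∑ j ∈ Finset.range m, (if 0 < j then (1:ℝ)/2 else 0) := by
      rw [← Finset.sum_filter, ← Finset.sum_filter]
      rw [show (Finset.range m).filter (fun j => j < m - 1) = Finset.range (m - 1) by
          ext j; simp [Finset.mem_range]; omega,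
        show (Finset.range m).filter (fun j => 0 < j) = Finset.Ico 1 m by
          ext j; simp [Finset.mem_range]; omega]
      rw [Finset.sum_const, Finset.sum_const, Finset.card_range, Nat.card_Ico]
    rw [f1]
    rw [hml (by omega : 1 ≤ m) hℓ]
    ring
  rw [hcross, sumS1D hm hℓ]
  ring

end

lemma cos_lip (a b : ℝ) : |Real.cos a - Real.cos b| ≤ |a - b| := by
  rw [Real.cos_sub_cos, abs_mul, abs_mul]
  have h1 : |Real.sin ((a + b) / 2)| ≤ 1 :=
    abs_le.2 ⟨Real.neg_one_le_sin _, Real.sin_le_one _⟩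
  have h2 : |Real.sin ((a - b) / 2)| ≤ |(a - b) / 2| := Real.abs_sin_le_abs
  calc |(-2 : ℝ)| * |Real.sin ((a + b) / 2)| * |Real.sin ((a - b) / 2)|
      ≤ |(-2 : ℝ)| * 1 * |(a - b) / 2| := by
        apply mul_le_mul (by apply mul_le_mul_of_nonneg_left h1; positivity) h2 (abs_nonneg _)
        positivity
    _ = |a - b| := by
        rw [abs_div]
        norm_num
        ring

section
variable {ℓ : ℝ} {m : ℕ}

lemma V1s0 (hm : 2 ≤ m) (hℓ : ℓ = (m : ℝ)⁻¹) :
    0 ≤ V1s ℓ m 0 ∧ V1s ℓ m 0 ≤ π ^ 2 * ℓ ^ 3 / 4 := by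
  have hl := hlpos (by omega : 1 ≤ m) hℓ
  have h0 : V1s ℓ m 0
      = ℓ / 6 * ((c ℓ 0 - c ℓ 1) ^ 2 + (c ℓ 1 - c ℓ 2) ^ 2 + (c ℓ 0 - c ℓ 2) ^ 2) := by
    rw [V1s, if_neg (by omega : ¬ (0:ℕ) < 0), if_pos (by omega : (0:ℕ) < m - 1)]
    rw [show Set.Icc ((((0:ℕ) : ℝ) + 0) * ℓ) ((((0:ℕ) : ℝ) + 1 + 1/2) * ℓ)
        = Set.Icc ((0 : ℝ) * ℓ / 2) (((0 : ℝ) + 3) * ℓ / 2) by congr 1 <;> push_cast <;> ring]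
    exact Var1_three hl hm
  have hb1 : |c ℓ 0 - c ℓ 1| ≤ π * ℓ / 2 := by
    rw [c, c]
    apply (cos_lip _ _).trans_eq
    rw [show π * ℓ / 2 * (((0:ℕ):ℝ) + 1/2) - π * ℓ / 2 * (((1:ℕ):ℝ) + 1/2)
        = -(π * ℓ / 2) by push_cast; ring, abs_neg, abs_of_nonneg (by positivity)]
  have hb2 : |c ℓ 1 - c ℓ 2| ≤ π * ℓ / 2 := by
    rw [c, c]
    apply (cos_lip _ _).trans_eq
    rw [show π * ℓ / 2 * (((1:ℕ):ℝ) + 1/2) - π * ℓ / 2 * (((2:ℕ):ℝ) + 1/2)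
        = -(π * ℓ / 2) by push_cast; ring, abs_neg, abs_of_nonneg (by positivity)]
  have hb3 : |c ℓ 0 - c ℓ 2| ≤ π * ℓ := by
    rw [c, c]
    apply (cos_lip _ _).trans_eq
    rw [show π * ℓ / 2 * (((0:ℕ):ℝ) + 1/2) - π * ℓ / 2 * (((2:ℕ):ℝ) + 1/2)
        = -(π * ℓ) by push_cast; ring, abs_neg, abs_of_nonneg (by positivity)]
  constructor
  · rw [h0]; positivity
  · rw [h0]
    have s1 : (c ℓ 0 - c ℓ 1) ^ 2 ≤ (π * ℓ / 2) ^ 2 := sq_le_sq' (by linarith [abs_le.1 hb1]) (by linarith [abs_le.1 hb1])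
    have s2 : (c ℓ 1 - c ℓ 2) ^ 2 ≤ (π * ℓ / 2) ^ 2 := sq_le_sq' (by linarith [abs_le.1 hb2]) (by linarith [abs_le.1 hb2])
    have s3 : (c ℓ 0 - c ℓ 2) ^ 2 ≤ (π * ℓ) ^ 2 := sq_le_sq' (by linarith [abs_le.1 hb3]) (by linarith [abs_le.1 hb3])
    nlinarith [hl.le]

lemma sinsq_taylor {x : ℝ} (h0 : 0 < x) (h1 : x ≤ 1) :
    x ^ 2 - x ^ 4 / 2 ≤ Real.sin x ^ 2 ∧ Real.sin x ^ 2 ≤ x ^ 2 := by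
  constructor
  · have hx2 : x ^ 2 ≤ 1 := by nlinarith
    have hgt : x - x ^ 3 / 4 < Real.sin x := by nlinarith [Real.sin_gt_sub_cube h0, pow_pos h0 3]
    have hpos : 0 < x - x ^ 3 / 4 := by nlinarith [hx2]
    have hsq : (x - x ^ 3 / 4) ^ 2 ≤ Real.sin x ^ 2 := by nlinarith [hgt, hpos]
    nlinarith [hsq, pow_nonneg h0.le 6]
  · exact Real.sin_sq_le_sq

end


set_option maxHeartbeats 1000000

/-- Optimality of the two-partition localization constant: for the oscillating step
function `u`, `Σ_k (Var_{B_{ℓ,k}}(u) + Var_{B_{ℓ,k}^{shift}}(u))` equals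
`(π²ℓ²/8) Var_{[0,1]³}(u)` up to an error of order `ℓ³ Var_{[0,1]³}(u)`. -/
theorem optimality_of_constant :
    ∃ C > (0 : ℝ), ∀ (m : ℕ), 0 < m → ∀ ℓ : ℝ, ℓ = (m : ℝ)⁻¹ →
      |(∑ k ∈ Fintype.piFinset (fun _ : Fin 3 => Finset.range m),
            (Var (B ℓ k) (stepFn ℓ m) + Var (Bshift ℓ m k) (stepFn ℓ m))) -
          π ^ 2 * ℓ ^ 2 / 8 * Var (Set.Icc (0 : Fin 3 → ℝ) 1) (stepFn ℓ m)|
        ≤ C * ℓ ^ 3 * Var (Set.Icc (0 : Fin 3 → ℝ) 1) (stepFn ℓ m) := by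
  refine ⟨20, by norm_num, ?_⟩
  intro m hm0 ℓ hℓ
  have hm1 : 1 ≤ m := hm0
  have hl := hlpos hm1 hℓ
  rw [VarTot3D hm1 hℓ]
  by_cases hm : 2 ≤ m
  · -- main case
    have hle2 : ℓ ≤ 1 / 2 := by
      have h2 : (2:ℝ) ≤ m := by exact_mod_cast hm
      rw [hℓ, inv_le_comm₀ (by linarith) (by norm_num)]
      linarith
    have hhalf : ℓ * ((m : ℝ) / 2) = 1 / 2 := by
      have h := hml hm1 hℓ
      linear_combination h / 2
    rw [Finset.sum_add_distrib, sumB3D hm hℓ, sumS3D hm hℓ]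
    set s := Real.sin (π * ℓ / 4) ^ 2 with hs
    set q := Real.sin (π * ℓ) ^ 2 with hq
    set V := V1s ℓ m 0 with hV
    set x := π * ℓ / 4 with hx
    have hx0 : 0 < x := by positivity
    have hx1 : x ≤ 1 := by nlinarith [Real.pi_le_four, hl.le]
    obtain ⟨hslow, hsup⟩ := sinsq_taylor hx0 hx1
    have hs0 : (0:ℝ) ≤ s := sq_nonneg _
    have hq0 : (0:ℝ) ≤ q := sq_nonneg _
    have hq1 : q ≤ 1 := Real.sin_sq_le_one _
    obtain ⟨hV0, hVub⟩ := V1s0 hm hℓ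
    have hpi2 : π ^ 2 ≤ 16 := by nlinarith [Real.pi_le_four, Real.pi_pos]
    have hVub' : V ≤ 4 * ℓ ^ 3 := by nlinarith [pow_pos hl 3]
    have hxle : x ≤ ℓ := by nlinarith [Real.pi_le_four, hl]
    have hx2le : x ^ 2 ≤ ℓ ^ 2 := by nlinarith [hx0.le, hxle]
    have hx4le : x ^ 4 ≤ ℓ ^ 4 := by
      have h := mul_nonneg (sub_nonneg.2 hx2le) (by positivity : (0:ℝ) ≤ x ^ 2 + ℓ ^ 2)
      nlinarith [h]
    have hl4 : ℓ ^ 4 ≤ ℓ ^ 3 / 2 := by nlinarith [pow_pos hl 3]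
    have hls : ℓ * s ≤ ℓ ^ 3 := by nlinarith [hl.le, hsup, hx2le]
    have hlsq1 : ℓ * s * q ≤ ℓ * s := by
      nlinarith [mul_nonneg (mul_nonneg hl.le hs0) (sub_nonneg.2 hq1)]
    have hlsq0 : 0 ≤ ℓ * s * q := by positivity
    have hexp : ℓ * s * ((m : ℝ) / 2 - q) = s / 2 - ℓ * s * q := by
      linear_combination s * hhalf
    rw [hexp]
    have heq : π ^ 2 * ℓ ^ 2 / 8 * (1 / 2) = x ^ 2 := by rw [hx]; ring
    rw [heq]
    have hl3 : 0 < ℓ ^ 3 := pow_pos hl 3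
    rw [abs_le]
    constructor
    · linarith [hslow, hls, hlsq1, hV0]
    · linarith [hsup, hlsq0, hVub']
  · -- m = 1
    have hm1' : m = 1 := by omega
    subst hm1'
    have hℓ1 : ℓ = 1 := by rw [hℓ]; norm_num
    subst hℓ1
    have hpi : Fintype.piFinset (fun _ : Fin 3 => Finset.range 1) = {fun _ => 0} := by
      ext k
      simp [Fintype.mem_piFinset, Nat.lt_one_iff, funext_iff]
    rw [hpi, Finset.sum_singleton]
    have hBset : B 1 (fun _ => 0) = Set.Icc (0 : Fin 3 → ℝ) 1 := by
      ext x
      simp [B, Set.mem_Icc, Pi.le_def]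
    have hSset : Bshift 1 1 (fun _ => 0) = Set.Icc (0 : Fin 3 → ℝ) 1 := by
      ext x
      simp [Bshift, Set.mem_Icc, Pi.le_def]
    rw [hBset, hSset, VarTot3D (le_refl 1) hℓ]
    rw [abs_le]
    constructor <;> nlinarith [Real.pi_le_four, Real.pi_pos]
end

section
/- Let ℓ > 0 with ℓ⁻¹ ∈ ℕ, ℓ⁻¹ ≥ 6. Let k, s ∈ {0,1,…,ℓ⁻¹−1}³ with 2 ≤ k_i ≤ ℓ⁻¹ − 3 for all i, and s ≠ k. Then Σ_{s' ∈ {0,…,ℓ⁻¹−1}³} |B_{ℓ,k} ∩ B_{ℓ,s'}^{shift}| · |B_{ℓ,s} ∩ B_{ℓ,s'}^{shift}| / (ℓ³ |B_{ℓ,s'}^{shift}|) equals 1/16 if |k−s|₁ = 1; equals 1/32 if |k−s|_∞ = 1 and |k−s|₁ = 2; equals 1/64 if |k−s|_∞ = 1 and |k−s|₁ = 3; and equals 0 if |k−s|_∞ ≥ 2. Here |·|₁ and |·|_∞ denote the ℓ¹- and ℓ^∞-norms on ℤ³ and |·| denotes Lebesgue measure. -/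
open MeasureTheory Real

/-- The edge weight
`Σ_{s'} |B_{ℓ,k} ∩ B_{ℓ,s'}^{shift}||B_{ℓ,s} ∩ B_{ℓ,s'}^{shift}|/(ℓ³|B_{ℓ,s'}^{shift}|)`. -/
noncomputable def edgeWeight (ℓ : ℝ) (m : ℕ) (k s : Fin 3 → ℕ) : ℝ :=
  ∑ s' ∈ Fintype.piFinset (fun _ : Fin 3 => Finset.range m),
    (volume (B ℓ k ∩ Bshift ℓ m s')).toReal * (volume (B ℓ s ∩ Bshift ℓ m s')).toReal /
      (ℓ ^ 3 * (volume (Bshift ℓ m s')).toReal)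

noncomputable def e1 (x : ℕ) : ℝ := if 0 < x then 1/2 else 0
noncomputable def e2 (m x : ℕ) : ℝ := if x < m - 1 then 1/2 else 0
noncomputable def T (ℓ : ℝ) (m K S x : ℕ) : ℝ :=
  max (min (((K:ℝ)+1)*ℓ) (((x:ℝ)+1+e2 m x)*ℓ) - max ((K:ℝ)*ℓ) (((x:ℝ)+e1 x)*ℓ)) 0 *
    max (min (((S:ℝ)+1)*ℓ) (((x:ℝ)+1+e2 m x)*ℓ) - max ((S:ℝ)*ℓ) (((x:ℝ)+e1 x)*ℓ)) 0 /
    (ℓ * max (((x:ℝ)+1+e2 m x)*ℓ - ((x:ℝ)+e1 x)*ℓ) 0)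
noncomputable def W (n : ℕ) : ℝ := if n = 0 then 1/2 else if n = 1 then 1/4 else 0

set_option maxHeartbeats 1000000 in
lemma sum_T (m : ℕ) (ℓ : ℝ) (hℓ : 0 < ℓ) (K S : ℕ) (hK1 : 2 ≤ K) (hK2 : K + 3 ≤ m)
    (hS : S < m) :
    ∑ x ∈ Finset.range m, T ℓ m K S x = W ((K:ℤ) - S).natAbs := by
  have hsub : ({K-1, K} : Finset ℕ) ⊆ Finset.range m := by
    intro x hx; simp only [Finset.mem_insert, Finset.mem_singleton] at hx
    simp only [Finset.mem_range]; omega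
  rw [← Finset.sum_subset hsub (by
    intro x hx hnx
    simp only [Finset.mem_insert, Finset.mem_singleton, not_or] at hnx
    simp only [Finset.mem_range] at hx
    have hx' : x + 2 ≤ K ∨ K + 1 ≤ x := by omega
    have hz : max (min (((K:ℝ)+1)*ℓ) (((x:ℝ)+1+e2 m x)*ℓ)
        - max ((K:ℝ)*ℓ) (((x:ℝ)+e1 x)*ℓ)) 0 = 0 := by
      apply max_eq_right
      rw [sub_nonpos]
      rcases hx' with h | h
      · have hc : (x:ℝ) + 2 ≤ K := by exact_mod_cast h
        have he : e2 m x ≤ 1/2 := by unfold e2; split <;> norm_num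
        calc min (((K:ℝ)+1)*ℓ) (((x:ℝ)+1+e2 m x)*ℓ) ≤ ((x:ℝ)+1+e2 m x)*ℓ := min_le_right _ _
          _ ≤ (K:ℝ)*ℓ := by nlinarith
          _ ≤ max ((K:ℝ)*ℓ) (((x:ℝ)+e1 x)*ℓ) := le_max_left _ _
      · have hc : (K:ℝ) + 1 ≤ x := by exact_mod_cast h
        have he : e1 x = 1/2 := by unfold e1; rw [if_pos (by omega)]
        calc min (((K:ℝ)+1)*ℓ) (((x:ℝ)+1+e2 m x)*ℓ) ≤ ((K:ℝ)+1)*ℓ := min_le_left _ _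
          _ ≤ ((x:ℝ)+e1 x)*ℓ := by rw [he]; nlinarith
          _ ≤ max ((K:ℝ)*ℓ) (((x:ℝ)+e1 x)*ℓ) := le_max_right _ _
    simp [T, hz])]
  rw [Finset.sum_pair (by omega : K - 1 ≠ K)]
  have he1a : e1 (K-1) = 1/2 := by unfold e1; rw [if_pos (by omega)]
  have he2a : e2 m (K-1) = 1/2 := by unfold e2; rw [if_pos (by omega)]
  have he1b : e1 K = 1/2 := by unfold e1; rw [if_pos (by omega)]
  have he2b : e2 m K = 1/2 := by unfold e2; rw [if_pos (by omega)]
  have hc : ((K-1:ℕ):ℝ) = (K:ℝ) - 1 := by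
    rw [Nat.cast_sub (by omega : 1 ≤ K)]; norm_num
  simp only [T, he1a, he2a, he1b, he2b, hc]
  have hmin : ∀ a b : ℝ, min (a*ℓ) (b*ℓ) = min a b * ℓ := fun a b =>
    (min_mul_of_nonneg a b hℓ.le).symm
  have hmax : ∀ a b : ℝ, max (a*ℓ) (b*ℓ) = max a b * ℓ := fun a b =>
    (max_mul_of_nonneg a b hℓ.le).symm
  have hsb : ∀ a b : ℝ, a*ℓ - b*ℓ = (a-b)*ℓ := fun a b => (sub_mul a b ℓ).symm
  have hmax0 : ∀ a : ℝ, max (a*ℓ) 0 = max a 0 * ℓ := fun a => by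
    have := max_mul_of_nonneg a 0 hℓ.le; simpa using this.symm
  have hdiv : ∀ a b c : ℝ, (a*ℓ)*(b*ℓ)/(ℓ*(c*ℓ)) = a*b/c := by
    intro a b c
    rcases eq_or_ne c 0 with rfl | hc
    · simp
    · field_simp
  simp only [hmin, hmax, hsb, hmax0, hdiv]
  have hd1 : ((K:ℝ) - 1 + 1 + 1/2 - ((K:ℝ) - 1 + 1/2)) ⊔ 0 = 1 := by
    rw [show ((K:ℝ) - 1 + 1 + 1/2 - ((K:ℝ) - 1 + 1/2)) = 1 by ring,
      max_eq_left (by norm_num : (0:ℝ) ≤ 1)]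
  have hd2 : ((K:ℝ) + 1 + 1/2 - ((K:ℝ) + 1/2)) ⊔ 0 = 1 := by
    rw [show ((K:ℝ) + 1 + 1/2 - ((K:ℝ) + 1/2)) = 1 by ring,
      max_eq_left (by norm_num : (0:ℝ) ≤ 1)]
  have hf1 : (((K:ℝ) + 1) ⊓ ((K:ℝ) - 1 + 1 + 1/2) - (K:ℝ) ⊔ ((K:ℝ) - 1 + 1/2)) ⊔ 0 = 1/2 := by
    rw [min_eq_right (show (K:ℝ) - 1 + 1 + 1/2 ≤ (K:ℝ) + 1 by linarith),
      max_eq_left (show (K:ℝ) - 1 + 1/2 ≤ (K:ℝ) by linarith),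
      show (K:ℝ) - 1 + 1 + 1/2 - (K:ℝ) = 1/2 by ring,
      max_eq_left (show (0:ℝ) ≤ 1/2 by norm_num)]
  have hf2 : (((K:ℝ) + 1) ⊓ ((K:ℝ) + 1 + 1/2) - (K:ℝ) ⊔ ((K:ℝ) + 1/2)) ⊔ 0 = 1/2 := by
    rw [min_eq_left (show (K:ℝ) + 1 ≤ (K:ℝ) + 1 + 1/2 by linarith),
      max_eq_right (show (K:ℝ) ≤ (K:ℝ) + 1/2 by linarith),
      show (K:ℝ) + 1 - ((K:ℝ) + 1/2) = 1/2 by ring,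
      max_eq_left (show (0:ℝ) ≤ 1/2 by norm_num)]
  rw [hd1, hd2, hf1, hf2, div_one, div_one]
  have zA : (S:ℝ) + 1 ≤ (K:ℝ) - 1 + 1/2 ∨ (K:ℝ) - 1 + 1 + 1/2 ≤ (S:ℝ) →
      (((S:ℝ) + 1) ⊓ ((K:ℝ) - 1 + 1 + 1/2) - (S:ℝ) ⊔ ((K:ℝ) - 1 + 1/2)) ⊔ 0 = 0 := by
    intro h
    apply max_eq_right; rw [sub_nonpos]
    have h1 := min_le_left ((S:ℝ) + 1) ((K:ℝ) - 1 + 1 + 1/2)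
    have h2 := min_le_right ((S:ℝ) + 1) ((K:ℝ) - 1 + 1 + 1/2)
    have h3 := le_max_left (S:ℝ) ((K:ℝ) - 1 + 1/2)
    have h4 := le_max_right (S:ℝ) ((K:ℝ) - 1 + 1/2)
    rcases h with h | h <;> linarith
  have zB : (S:ℝ) + 1 ≤ (K:ℝ) + 1/2 ∨ (K:ℝ) + 1 + 1/2 ≤ (S:ℝ) →
      (((S:ℝ) + 1) ⊓ ((K:ℝ) + 1 + 1/2) - (S:ℝ) ⊔ ((K:ℝ) + 1/2)) ⊔ 0 = 0 := by
    intro h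
    apply max_eq_right; rw [sub_nonpos]
    have h1 := min_le_left ((S:ℝ) + 1) ((K:ℝ) + 1 + 1/2)
    have h2 := min_le_right ((S:ℝ) + 1) ((K:ℝ) + 1 + 1/2)
    have h3 := le_max_left (S:ℝ) ((K:ℝ) + 1/2)
    have h4 := le_max_right (S:ℝ) ((K:ℝ) + 1/2)
    rcases h with h | h <;> linarith
  rcases (by omega : S + 2 ≤ K ∨ S + 1 = K ∨ S = K ∨ S = K + 1 ∨ K + 2 ≤ S) with h|h|h|h|h
  · have hr : (S:ℝ) + 2 ≤ K := by exact_mod_cast h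
    have hW : W ((K:ℤ) - S).natAbs = 0 := by
      unfold W; rw [if_neg (by omega), if_neg (by omega)]
    rw [zA (Or.inl (by linarith)), zB (Or.inl (by linarith)), hW]; ring
  · have hr : (S:ℝ) + 1 = K := by exact_mod_cast h
    have hW : W ((K:ℤ) - S).natAbs = 1/4 := by
      unfold W; rw [if_neg (by omega), if_pos (by omega)]
    have hA : (((S:ℝ) + 1) ⊓ ((K:ℝ) - 1 + 1 + 1/2) - (S:ℝ) ⊔ ((K:ℝ) - 1 + 1/2)) ⊔ 0 = 1/2 := by
      rw [min_eq_left (show (S:ℝ) + 1 ≤ (K:ℝ) - 1 + 1 + 1/2 by linarith),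
        max_eq_right (show (S:ℝ) ≤ (K:ℝ) - 1 + 1/2 by linarith),
        show (S:ℝ) + 1 - ((K:ℝ) - 1 + 1/2) = 1/2 by linarith,
        max_eq_left (show (0:ℝ) ≤ 1/2 by norm_num)]
    rw [hA, zB (Or.inl (by linarith)), hW]; ring
  · have hr : (S:ℝ) = K := by exact_mod_cast h
    have hW : W ((K:ℤ) - S).natAbs = 1/2 := by
      unfold W; rw [if_pos (by omega)]
    have hA : (((S:ℝ) + 1) ⊓ ((K:ℝ) - 1 + 1 + 1/2) - (S:ℝ) ⊔ ((K:ℝ) - 1 + 1/2)) ⊔ 0 = 1/2 := by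
      rw [min_eq_right (show (K:ℝ) - 1 + 1 + 1/2 ≤ (S:ℝ) + 1 by linarith),
        max_eq_left (show (K:ℝ) - 1 + 1/2 ≤ (S:ℝ) by linarith),
        show (K:ℝ) - 1 + 1 + 1/2 - (S:ℝ) = 1/2 by linarith,
        max_eq_left (show (0:ℝ) ≤ 1/2 by norm_num)]
    have hB : (((S:ℝ) + 1) ⊓ ((K:ℝ) + 1 + 1/2) - (S:ℝ) ⊔ ((K:ℝ) + 1/2)) ⊔ 0 = 1/2 := by
      rw [min_eq_left (show (S:ℝ) + 1 ≤ (K:ℝ) + 1 + 1/2 by linarith),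
        max_eq_right (show (S:ℝ) ≤ (K:ℝ) + 1/2 by linarith),
        show (S:ℝ) + 1 - ((K:ℝ) + 1/2) = 1/2 by linarith,
        max_eq_left (show (0:ℝ) ≤ 1/2 by norm_num)]
    rw [hA, hB, hW]; ring
  · have hr : (S:ℝ) = (K:ℝ) + 1 := by exact_mod_cast h
    have hW : W ((K:ℤ) - S).natAbs = 1/4 := by
      unfold W; rw [if_neg (by omega), if_pos (by omega)]
    have hB : (((S:ℝ) + 1) ⊓ ((K:ℝ) + 1 + 1/2) - (S:ℝ) ⊔ ((K:ℝ) + 1/2)) ⊔ 0 = 1/2 := by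
      rw [min_eq_right (show (K:ℝ) + 1 + 1/2 ≤ (S:ℝ) + 1 by linarith),
        max_eq_left (show (K:ℝ) + 1/2 ≤ (S:ℝ) by linarith),
        show (K:ℝ) + 1 + 1/2 - (S:ℝ) = 1/2 by linarith,
        max_eq_left (show (0:ℝ) ≤ 1/2 by norm_num)]
    rw [zA (Or.inr (by linarith)), hB, hW]; ring
  · have hr : (K:ℝ) + 2 ≤ S := by exact_mod_cast h
    have hW : W ((K:ℤ) - S).natAbs = 0 := by
      unfold W; rw [if_neg (by omega), if_neg (by omega)]
    rw [zA (Or.inr (by linarith)), zB (Or.inr (by linarith)), hW]; ring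

lemma edgeWeight_eq (ℓ : ℝ) (m : ℕ) (k s : Fin 3 → ℕ) :
    edgeWeight ℓ m k s = ∏ i, ∑ x ∈ Finset.range m, T ℓ m (k i) (s i) x := by
  rw [Finset.prod_univ_sum]
  unfold edgeWeight
  refine Finset.sum_congr rfl fun s' _ => ?_
  have hB : ∀ K : Fin 3 → ℕ, (volume (B ℓ K ∩ Bshift ℓ m s')).toReal
      = ∏ i, max (min (((K i:ℝ)+1)*ℓ) (((s' i:ℝ)+1+e2 m (s' i))*ℓ)
          - max ((K i:ℝ)*ℓ) (((s' i:ℝ)+e1 (s' i))*ℓ)) 0 := by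
    intro K
    rw [B, Bshift, Set.Icc_inter_Icc, Real.volume_Icc_pi, ENNReal.toReal_prod]
    simp [ENNReal.toReal_ofReal', e1, e2]
  have hV : (volume (Bshift ℓ m s')).toReal
      = ∏ i, max ((((s' i:ℝ))+1+e2 m (s' i))*ℓ - (((s' i:ℝ))+e1 (s' i))*ℓ) 0 := by
    rw [Bshift, Real.volume_Icc_pi, ENNReal.toReal_prod]
    simp [ENNReal.toReal_ofReal', e1, e2]
  rw [hB k, hB s, hV, show (ℓ:ℝ)^3 = ∏ _i : Fin 3, ℓ by simp,
    ← Finset.prod_mul_distrib, ← Finset.prod_mul_distrib, ← Finset.prod_div_distrib]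
  rfl

/-- Overlap weights of the discrete operator: for `k` away from the boundary
(`2 ≤ k_i ≤ ℓ⁻¹ − 3`) and `s ≠ k`, the edge weight equals `1/16` for nearest neighbours,
`1/32` for face diagonals, `1/64` for body diagonals, and `0` otherwise. -/
theorem overlap_weights (m : ℕ) (hm : 6 ≤ m) (ℓ : ℝ) (hℓ : ℓ = (m : ℝ)⁻¹)
    (k s : Fin 3 → ℕ) (hk : ∀ i, 2 ≤ k i ∧ k i ≤ m - 3) (hs : ∀ i, s i < m)
    (hne : s ≠ k) :
    ((∑ i, ((k i : ℤ) - (s i : ℤ)).natAbs) = 1 → edgeWeight ℓ m k s = 1 / 16) ∧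
    ((Finset.univ.sup (fun i => ((k i : ℤ) - (s i : ℤ)).natAbs) = 1 ∧
        (∑ i, ((k i : ℤ) - (s i : ℤ)).natAbs) = 2) → edgeWeight ℓ m k s = 1 / 32) ∧
    ((Finset.univ.sup (fun i => ((k i : ℤ) - (s i : ℤ)).natAbs) = 1 ∧
        (∑ i, ((k i : ℤ) - (s i : ℤ)).natAbs) = 3) → edgeWeight ℓ m k s = 1 / 64) ∧
    (2 ≤ Finset.univ.sup (fun i => ((k i : ℤ) - (s i : ℤ)).natAbs) →
      edgeWeight ℓ m k s = 0) := by
  have hmpos : (0:ℝ) < m := by exact_mod_cast (by omega : 0 < m)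
  have hℓpos : 0 < ℓ := by rw [hℓ]; exact inv_pos.2 hmpos
  have hE : edgeWeight ℓ m k s = ∏ i, W ((k i : ℤ) - (s i : ℤ)).natAbs := by
    rw [edgeWeight_eq]
    refine Finset.prod_congr rfl fun i _ => ?_
    exact sum_T m ℓ hℓpos (k i) (s i) (hk i).1
      (by have h1 := (hk i).1; have h2 := (hk i).2; omega) (hs i)
  have hprod : edgeWeight ℓ m k s =
      W ((k 0 : ℤ) - (s 0 : ℤ)).natAbs * (W ((k 1 : ℤ) - (s 1 : ℤ)).natAbs *
        W ((k 2 : ℤ) - (s 2 : ℤ)).natAbs) := by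
    rw [hE, Fin.prod_univ_three]; ring
  set a := ((k 0 : ℤ) - (s 0 : ℤ)).natAbs with ha
  set b := ((k 1 : ℤ) - (s 1 : ℤ)).natAbs with hb
  set c := ((k 2 : ℤ) - (s 2 : ℤ)).natAbs with hc
  have hsup : Finset.univ.sup (fun i => ((k i : ℤ) - (s i : ℤ)).natAbs) = max a (max b c) := by
    rw [show (Finset.univ : Finset (Fin 3)) = {0, 1, 2} from rfl]
    simp [Finset.sup_insert, ha, hb, hc]
  have hsum : (∑ i, ((k i : ℤ) - (s i : ℤ)).natAbs) = a + b + c := by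
    rw [Fin.sum_univ_three]
  refine ⟨?_, ?_, ?_, ?_⟩
  · intro h
    rw [hsum] at h
    have hcase : (a = 1 ∧ b = 0 ∧ c = 0) ∨ (a = 0 ∧ b = 1 ∧ c = 0) ∨
        (a = 0 ∧ b = 0 ∧ c = 1) := by omega
    rw [hprod]
    rcases hcase with ⟨h1, h2, h3⟩ | ⟨h1, h2, h3⟩ | ⟨h1, h2, h3⟩ <;>
      rw [h1, h2, h3] <;> norm_num [W]
  · rintro ⟨h1, h2⟩
    rw [hsup] at h1
    rw [hsum] at h2
    have ha1 : a ≤ 1 := h1 ▸ le_max_left a (max b c)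
    have hb1 : b ≤ 1 := h1 ▸ (le_max_left b c).trans (le_max_right a (max b c))
    have hc1 : c ≤ 1 := h1 ▸ (le_max_right b c).trans (le_max_right a (max b c))
    have hcase : (a = 1 ∧ b = 1 ∧ c = 0) ∨ (a = 1 ∧ b = 0 ∧ c = 1) ∨
        (a = 0 ∧ b = 1 ∧ c = 1) := by omega
    rw [hprod]
    rcases hcase with ⟨g1, g2, g3⟩ | ⟨g1, g2, g3⟩ | ⟨g1, g2, g3⟩ <;>
      rw [g1, g2, g3] <;> norm_num [W]
  · rintro ⟨h1, h2⟩
    rw [hsup] at h1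
    rw [hsum] at h2
    have ha1 : a ≤ 1 := h1 ▸ le_max_left a (max b c)
    have hb1 : b ≤ 1 := h1 ▸ (le_max_left b c).trans (le_max_right a (max b c))
    have hc1 : c ≤ 1 := h1 ▸ (le_max_right b c).trans (le_max_right a (max b c))
    have g1 : a = 1 := by omega
    have g2 : b = 1 := by omega
    have g3 : c = 1 := by omega
    rw [hprod, g1, g2, g3]; norm_num [W]
  · intro h1
    rw [hsup] at h1
    have hcase : 2 ≤ a ∨ 2 ≤ b ∨ 2 ≤ c := by
      rcases le_max_iff.mp h1 with h | h
      · exact Or.inl h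
      · rcases le_max_iff.mp h with h | h
        · exact Or.inr (Or.inl h)
        · exact Or.inr (Or.inr h)
    rw [hprod]
    rcases hcase with h | h | h
    · rw [show W a = 0 from by unfold W; rw [if_neg (by omega), if_neg (by omega)]]; ring
    · rw [show W b = 0 from by unfold W; rw [if_neg (by omega), if_neg (by omega)]]; ring
    · rw [show W c = 0 from by unfold W; rw [if_neg (by omega), if_neg (by omega)]]; ring
end

section
/- Let n ∈ ℕ, n ≥ 2. For m ∈ {0,1,…,n−1}³ define λ_m = (1/8) [ Σ_{i=1}^3 (1 − cos(π m_i / n)) + Σ_{1 ≤ i < j ≤ 3} (1 − cos(π m_i / n) cos(π m_j / n)) + (1 − ∏_{i=1}^3 cos(π m_i / n)) ]. Then for every m ≠ (0,0,0) one has λ_m ≥ (1 − cos(π/n))/2, and λ_{(1,0,0)} = (1 − cos(π/n))/2. -/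
open Real

/-- The eigenvalue `λ_m` of the weighted Neumann graph Laplacian on `{0,…,n−1}³`. -/
noncomputable def lam (n : ℕ) (m : Fin 3 → ℕ) : ℝ :=
  (1 / 8) * ((∑ i, (1 - Real.cos (π * (m i) / n))) +
    (∑ p ∈ Finset.univ.filter (fun p : Fin 3 × Fin 3 => p.1 < p.2),
      (1 - Real.cos (π * (m p.1) / n) * Real.cos (π * (m p.2) / n))) +
    (1 - ∏ i, Real.cos (π * (m i) / n)))

lemma lam_eq (n : ℕ) (m : Fin 3 → ℕ) :
    lam n m = 1 - (1 + Real.cos (π * (m 0) / n)) * (1 + Real.cos (π * (m 1) / n)) *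
      (1 + Real.cos (π * (m 2) / n)) / 8 := by
  unfold lam
  rw [Fin.sum_univ_three, Fin.prod_univ_three, Finset.sum_filter, Fintype.sum_prod_type]
  simp [Fin.sum_univ_three]
  ring

lemma cos_le (n : ℕ) (hn : 2 ≤ n) (k : ℕ) (hk : 1 ≤ k) (hk' : k < n) :
    Real.cos (π * k / n) ≤ Real.cos (π / n) := by
  have hnpos : (0:ℝ) < n := by positivity
  have hk1 : (1:ℝ) ≤ (k:ℝ) := by exact_mod_cast hk
  have hkn : (k:ℝ) ≤ n := by exact_mod_cast hk'.le
  apply Real.cos_le_cos_of_nonneg_of_le_pi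
  · positivity
  · rw [div_le_iff₀ hnpos]
    exact mul_le_mul_of_nonneg_left hkn Real.pi_pos.le
  · have h : π * 1 ≤ π * k := mul_le_mul_of_nonneg_left hk1 Real.pi_pos.le
    calc π / n = π * 1 / n := by rw [mul_one]
      _ ≤ π * k / n := div_le_div_of_nonneg_right h hnpos.le

lemma key_ineq (C a b c : ℝ) (hC0 : -1 ≤ C) (hb : -1 ≤ b) (hb1 : b ≤ 1) (hc : -1 ≤ c)
    (hc1 : c ≤ 1) (haC : a ≤ C) (hC1 : C ≤ 1) :
    (1 + a) * (1 + b) * (1 + c) ≤ 4 * (1 + C) := by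
  have hbc : 0 ≤ (1 + b) * (1 + c) := mul_nonneg (by linarith) (by linarith)
  have h1 : (1 + a) * ((1 + b) * (1 + c)) ≤ (1 + C) * ((1 + b) * (1 + c)) :=
    mul_le_mul_of_nonneg_right (by linarith) hbc
  have h2 : (1 + b) * (1 + c) ≤ 4 := by nlinarith
  have h3 : (1 + C) * ((1 + b) * (1 + c)) ≤ (1 + C) * 4 :=
    mul_le_mul_of_nonneg_left h2 (by linarith)
  nlinarith

/-- The spectral gap of the weighted Neumann graph Laplacian: for `m ≠ 0`,
`λ_m ≥ (1 − cos(π/n))/2`, with equality for `m = (1,0,0)`. -/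
theorem lam_spectral_gap (n : ℕ) (hn : 2 ≤ n) :
    (∀ m : Fin 3 → ℕ, (∀ i, m i < n) → m ≠ 0 →
      lam n m ≥ (1 - Real.cos (π / n)) / 2) ∧
    lam n (fun i => if i = 0 then 1 else 0) = (1 - Real.cos (π / n)) / 2 := by
  have hnpos : (0:ℝ) < n := by positivity
  constructor
  · intro m hm hm0
    rw [lam_eq]
    have hC1 : Real.cos (π / n) ≤ 1 := Real.cos_le_one _
    have hC0 : -1 ≤ Real.cos (π / n) := Real.neg_one_le_cos _
    have hex : ∃ i, 1 ≤ m i := by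
      by_contra h
      push_neg at h
      exact hm0 (funext fun i => Nat.lt_one_iff.mp (h i))
    obtain ⟨i, hi⟩ := hex
    have hiC : Real.cos (π * (m i) / n) ≤ Real.cos (π / n) := cos_le n hn (m i) hi (hm i)
    have h00 := Real.neg_one_le_cos (π * (m 0) / n)
    have h01 := Real.cos_le_one (π * (m 0) / n)
    have h10 := Real.neg_one_le_cos (π * (m 1) / n)
    have h11 := Real.cos_le_one (π * (m 1) / n)
    have h20 := Real.neg_one_le_cos (π * (m 2) / n)
    have h21 := Real.cos_le_one (π * (m 2) / n)
    fin_cases i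
    · have := key_ineq (Real.cos (π / n)) (Real.cos (π * (m 0) / n))
        (Real.cos (π * (m 1) / n)) (Real.cos (π * (m 2) / n)) hC0 h10 h11 h20 h21 hiC hC1
      nlinarith [this]
    · have := key_ineq (Real.cos (π / n)) (Real.cos (π * (m 1) / n))
        (Real.cos (π * (m 0) / n)) (Real.cos (π * (m 2) / n)) hC0 h00 h01 h20 h21 hiC hC1
      nlinarith [this]
    · have := key_ineq (Real.cos (π / n)) (Real.cos (π * (m 2) / n))
        (Real.cos (π * (m 0) / n)) (Real.cos (π * (m 1) / n)) hC0 h00 h01 h10 h11 hiC hC1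
      nlinarith [this]
  · rw [lam_eq]
    norm_num [show (1:Fin 3) ≠ 0 from by decide, show (2:Fin 3) ≠ 0 from by decide]
    ring
end

section
/- Let n ∈ ℕ, n ≥ 2, and let f : {0,…,n−1}³ → ℝ with mean f̄ = n⁻³ Σ_k f(k). Then Σ_{i=1}^{3} Σ_{k : k_i ≤ n−2} (f(k + e_i) − f(k))² ≥ 2 (1 − cos(π/n)) Σ_{k} (f(k) − f̄)², where e_i denotes the i-th standard basis vector of ℤ³. (Spectral gap of the nearest-neighbour discrete Neumann Laplacian on the n×n×n grid.) -/
open Real Finset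


lemma sin_rec (θ x : ℝ) : Real.sin (x + θ) + Real.sin (x - θ) = 2 * Real.cos θ * Real.sin x := by
  rw [Real.sin_add, Real.sin_sub]; ring

-- ground state inequality for the Dirichlet Laplacian on n-1 points
lemma gs_ineq (n : ℕ) (hn : 2 ≤ n) (w : ℕ → ℝ) :
    2 * ∑ j ∈ range (n-2), w j * w (j+1) ≤ 2 * Real.cos (π/n) * ∑ j ∈ range (n-1), w j ^ 2 := by
  obtain ⟨m, rfl⟩ : ∃ m, n = m + 2 := ⟨n - 2, by omega⟩
  set N := m + 2 with hN
  set θ := π / N with hθ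
  set φ : ℕ → ℝ := fun j => Real.sin (j * θ) with hφ
  have hNpos : (0:ℝ) < N := by positivity
  have hθpos : 0 < θ := by rw [hθ]; positivity
  have hNθ : (N:ℝ) * θ = π := by rw [hθ]; field_simp
  have hφ0 : φ 0 = 0 := by simp [hφ]
  have hφN : φ N = 0 := by simp [hφ, hNθ]
  have hφnonneg : ∀ j, j ≤ N → 0 ≤ φ j := by
    intro j hj
    apply Real.sin_nonneg_of_nonneg_of_le_pi
    · positivity
    · calc (j:ℝ) * θ ≤ (N:ℝ) * θ := by
            apply mul_le_mul_of_nonneg_right _ (le_of_lt hθpos)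
            exact_mod_cast hj
        _ = π := hNθ
  have hφpos : ∀ j, 1 ≤ j → j ≤ N - 1 → 0 < φ j := by
    intro j h1 h2
    apply Real.sin_pos_of_pos_of_lt_pi
    · have : (1:ℝ) ≤ (j:ℝ) := by exact_mod_cast h1
      nlinarith
    · calc (j:ℝ) * θ < (N:ℝ) * θ := by
            apply mul_lt_mul_of_pos_right _ hθpos
            have : j < N := by omega
            exact_mod_cast this
        _ = π := hNθ
  have hrec : ∀ j : ℕ, φ (j+1) * φ j + φ (j-1) * φ j = 2 * Real.cos θ * φ j ^ 2 := by
    intro j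
    match j with
    | 0 => simp [hφ0]
    | (k+1) =>
      have h1 : ((k+1+1:ℕ):ℝ) * θ = ((k+1:ℕ):ℝ) * θ + θ := by push_cast; ring
      have h2 : ((k+1-1:ℕ):ℝ) * θ = ((k+1:ℕ):ℝ) * θ - θ := by
        rw [show k+1-1 = k from rfl]; push_cast; ring
      have hs := sin_rec θ (((k+1:ℕ):ℝ) * θ)
      simp only [hφ]
      rw [h1, h2]
      linear_combination Real.sin (((k+1:ℕ):ℝ) * θ) * hs
  set u : ℕ → ℝ := fun j => w (j-1) / φ j with hu
  have hkey : ∑ j ∈ range N, φ j * φ (j+1) * (u j - u (j+1))^2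
      = 2 * Real.cos θ * ∑ j ∈ range (N+1), φ j ^2 * u j ^2
        - 2 * ∑ j ∈ range N, φ j * φ (j+1) * (u j * u (j+1)) := by
    have hsplit : ∑ j ∈ range N, φ j * φ (j+1) * (u j - u (j+1))^2
        = (∑ j ∈ range N, φ j * φ (j+1) * u j ^2
           + ∑ j ∈ range N, φ j * φ (j+1) * u (j+1) ^2)
          - 2 * ∑ j ∈ range N, φ j * φ (j+1) * (u j * u (j+1)) := by
      rw [← Finset.sum_add_distrib, Finset.mul_sum, ← Finset.sum_sub_distrib]
      apply Finset.sum_congr rfl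
      intro j _; ring
    rw [hsplit]
    congr 1
    have hA : ∑ j ∈ range N, φ j * φ (j+1) * u j ^2
        = ∑ j ∈ range (N+1), φ j * φ (j+1) * u j ^2 := by
      rw [Finset.sum_range_succ (fun j => φ j * φ (j+1) * u j ^2) N, hφN]
      ring
    have hB : ∑ j ∈ range N, φ j * φ (j+1) * u (j+1) ^2
        = ∑ j ∈ range (N+1), φ (j-1) * φ j * u j ^2 := by
      rw [Finset.sum_range_succ' (fun j => φ (j-1) * φ j * u j ^2) N]
      simp [hφ0, Nat.add_sub_cancel]
    rw [hA, hB, ← Finset.sum_add_distrib, Finset.mul_sum]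
    apply Finset.sum_congr rfl
    intro j _
    linear_combination (u j ^2) * hrec j
  have hLHS : 0 ≤ ∑ j ∈ range N, φ j * φ (j+1) * (u j - u (j+1))^2 := by
    apply Finset.sum_nonneg
    intro j hj
    rw [Finset.mem_range] at hj
    exact mul_nonneg (mul_nonneg (hφnonneg j (by omega)) (hφnonneg (j+1) (by omega))) (sq_nonneg _)
  have hS1 : ∑ j ∈ range (N+1), φ j ^2 * u j ^2 = ∑ j ∈ range (N-1), w j ^2 := by
    rw [Finset.sum_range_succ (fun j => φ j ^2 * u j ^2) N, hφN,
        Finset.sum_range_succ' (fun j => φ j ^2 * u j ^2) (m+1), hφ0]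
    have : ∀ j ∈ range (m+1), φ (j+1) ^2 * u (j+1) ^2 = w j ^2 := by
      intro j hj
      rw [Finset.mem_range] at hj
      have hne : φ (j+1) ≠ 0 := ne_of_gt (hφpos (j+1) (by omega) (by omega))
      simp only [hu, Nat.add_sub_cancel]
      field_simp
    rw [Finset.sum_congr rfl this]
    simp [hN]
  have hS2 : ∑ j ∈ range N, φ j * φ (j+1) * (u j * u (j+1)) = ∑ j ∈ range (N-2), w j * w (j+1) := by
    rw [show N = (m+1) + 1 from rfl,
        Finset.sum_range_succ (fun j => φ j * φ (j+1) * (u j * u (j+1))) (m+1),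
        Finset.sum_range_succ' (fun j => φ j * φ (j+1) * (u j * u (j+1))) m,
        hφ0]
    have hN2 : φ (m+1+1) = 0 := hφN
    rw [hN2]
    have : ∀ j ∈ range m, φ (j+1) * φ (j+1+1) * (u (j+1) * u (j+1+1)) = w j * w (j+1) := by
      intro j hj
      rw [Finset.mem_range] at hj
      have h1 : φ (j+1) ≠ 0 := ne_of_gt (hφpos (j+1) (by omega) (by omega))
      have h2 : φ (j+2) ≠ 0 := ne_of_gt (hφpos (j+2) (by omega) (by omega))
      simp only [hu, Nat.add_sub_cancel]
      field_simp
    rw [Finset.sum_congr rfl this]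
    simp [hN]
  rw [hkey, hS1, hS2] at hLHS
  have h1 : N - 2 = m := rfl
  have h2 : N - 1 = m + 1 := rfl
  linarith


lemma oneD_zero (n : ℕ) (hn : 2 ≤ n) (x : ℕ → ℝ) (hx : ∑ j ∈ range n, x j = 0) :
    2 * (1 - Real.cos (π/n)) * ∑ j ∈ range n, x j ^ 2
      ≤ ∑ j ∈ range (n-1), (x (j+1) - x j) ^ 2 := by
  obtain ⟨m, rfl⟩ : ∃ m, n = m + 2 := ⟨n - 2, by omega⟩
  set w : ℕ → ℝ := fun j => - ∑ i ∈ range (j+1), x i with hw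
  have hwsucc : ∀ j, w (j+1) = w j - x (j+1) := by
    intro j
    simp only [hw, Finset.sum_range_succ]
    ring
  have hxw : ∀ j, x (j+1) = w j - w (j+1) := by
    intro j; rw [hwsucc]; ring
  have hx0 : x 0 = - w 0 := by simp [hw]
  have hwlast : w (m+1) = 0 := by
    simp only [hw]
    rw [hx]
    ring
  set S := ∑ j ∈ range (m+2), x j ^ 2 with hS
  set W := ∑ j ∈ range (m+1), w j ^ 2 with hW
  set D := ∑ j ∈ range (m+1), (x (j+1) - x j) ^ 2 with hD
  set c := Real.cos (π/(m+2:ℕ)) with hc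
  -- sums of w products
  have hWsum : ∑ j ∈ range (m+1), w (j+1) ^ 2 = W - w 0 ^ 2 := by
    rw [hW, Finset.sum_range_succ' (fun j => w j ^ 2) m,
        Finset.sum_range_succ (fun j => w (j+1) ^ 2) m, hwlast]
    ring
  -- identity (ii): S = 2 W - 2 ∑ w w₊
  have hii : S = 2 * W - 2 * ∑ j ∈ range m, w j * w (j+1) := by
    have e1 : S = x 0 ^ 2 + ∑ j ∈ range (m+1), (w j - w (j+1)) ^ 2 := by
      rw [hS, Finset.sum_range_succ' (fun j => x j ^ 2) (m+1)]
      rw [Finset.sum_congr rfl (fun j _ => by rw [hxw j])]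
      ring
    have e2 : ∑ j ∈ range (m+1), (w j - w (j+1)) ^ 2
        = ∑ j ∈ range (m+1), w j ^ 2 + ∑ j ∈ range (m+1), w (j+1) ^ 2
          - 2 * ∑ j ∈ range (m+1), w j * w (j+1) := by
      rw [← Finset.sum_add_distrib, Finset.mul_sum, ← Finset.sum_sub_distrib]
      exact Finset.sum_congr rfl (fun j _ => by ring)
    have e3 : ∑ j ∈ range (m+1), w j ^ 2 = W := by
      rw [hW]
    have e4 : ∑ j ∈ range (m+1), w j * w (j+1)
        = ∑ j ∈ range m, w j * w (j+1) := by
      rw [Finset.sum_range_succ (fun j => w j * w (j+1)) m, hwlast]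
      ring
    rw [e1, e2, e3, e4, hWsum, hx0]
    ring
  -- identity (i): S = ∑ (x_{j+1} - x_j) w_j
  have hi : S = ∑ j ∈ range (m+1), (x (j+1) - x j) * w j := by
    have e1 : ∑ j ∈ range (m+1), (x (j+1) - x j) * w j
        = ∑ j ∈ range (m+1), x (j+1) * w j - ∑ j ∈ range (m+1), x j * w j := by
      rw [← Finset.sum_sub_distrib]
      exact Finset.sum_congr rfl (fun j _ => by ring)
    have e2 : ∑ j ∈ range (m+1), x (j+1) * w j
        = ∑ j ∈ range (m+1), (w j ^ 2 - w j * w (j+1)) := by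
      exact Finset.sum_congr rfl (fun j _ => by rw [hxw j]; ring)
    have e3 : ∑ j ∈ range (m+1), x j * w j
        = x 0 * w 0 + ∑ j ∈ range m, x (j+1) * w (j+1) := by
      rw [Finset.sum_range_succ' (fun j => x j * w j) m]
      ring
    have e4 : ∑ j ∈ range m, x (j+1) * w (j+1)
        = ∑ j ∈ range m, (w j * w (j+1) - w (j+1) ^ 2) := by
      exact Finset.sum_congr rfl (fun j _ => by rw [hxw j]; ring)
    have e5 : ∑ j ∈ range m, w (j+1) ^ 2 = W - w 0 ^ 2 - w (m+1) ^ 2 := by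
      rw [← hWsum, Finset.sum_range_succ (fun j => w (j+1) ^ 2) m]
      ring
    have e6 : ∑ j ∈ range (m+1), w j * w (j+1) = ∑ j ∈ range m, w j * w (j+1) := by
      rw [Finset.sum_range_succ (fun j => w j * w (j+1)) m, hwlast]; ring
    rw [e1, e2, Finset.sum_sub_distrib, e6, e3, e4, Finset.sum_sub_distrib, e5, hwlast, hx0, hii]
    ring
  -- gs bound : S ≥ 2(1-c) W
  have hgs : 2 * (1 - c) * W ≤ S := by
    have := gs_ineq (m+2) hn w
    rw [show m+2-2 = m from rfl, show m+2-1 = m+1 from rfl, ← hW, ← hc] at this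
    rw [hii]
    linarith
  -- Cauchy-Schwarz : S^2 ≤ D * W
  have hcs : S ^ 2 ≤ D * W := by
    rw [hi]
    calc (∑ j ∈ range (m+1), (x (j+1) - x j) * w j) ^ 2
        ≤ (∑ j ∈ range (m+1), (x (j+1) - x j) ^ 2) * ∑ j ∈ range (m+1), w j ^ 2 :=
          Finset.sum_mul_sq_le_sq_mul_sq _ _ _
      _ = D * W := by rw [hD, hW]
  have hSnn : 0 ≤ S := Finset.sum_nonneg (fun j _ => sq_nonneg _)
  have hWnn : 0 ≤ W := Finset.sum_nonneg (fun j _ => sq_nonneg _)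
  have hDnn : 0 ≤ D := Finset.sum_nonneg (fun j _ => sq_nonneg _)
  -- conclude
  show 2 * (1 - c) * S ≤ D
  rcases eq_or_lt_of_le hSnn with hS0 | hSpos
  · rw [← hS0]; linarith
  rcases eq_or_lt_of_le hWnn with hW0 | hWpos
  · exfalso; rw [← hW0] at hcs; nlinarith
  have h1 : 2 * (1 - c) * W * S ≤ S * S := by nlinarith
  nlinarith


lemma oneD_nat (n : ℕ) (hn : 2 ≤ n) (g : ℕ → ℝ) :
    2 * (1 - Real.cos (π/n)) *
        ∑ j ∈ range n, (g j - (n:ℝ)⁻¹ * ∑ j' ∈ range n, g j') ^ 2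
      ≤ ∑ j ∈ range (n-1), (g (j+1) - g j) ^ 2 := by
  set μ := (n:ℝ)⁻¹ * ∑ j' ∈ range n, g j' with hμ
  have hnne : (n:ℝ) ≠ 0 := by positivity
  have hx : ∑ j ∈ range n, (g j - μ) = 0 := by
    rw [Finset.sum_sub_distrib, Finset.sum_const, Finset.card_range, hμ, nsmul_eq_mul]
    field_simp
    ring
  have := oneD_zero n hn (fun j => g j - μ) hx
  simpa using this

lemma sum_Icc_int (m : ℕ) (h : ℤ → ℝ) :
    ∑ j ∈ Finset.Icc (0:ℤ) ((m:ℤ)-1), h j = ∑ j ∈ range m, h (j:ℤ) := by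
  have himg : (range m).image (Nat.cast : ℕ → ℤ) = Finset.Icc (0:ℤ) ((m:ℤ)-1) := by
    ext a
    simp only [Finset.mem_image, Finset.mem_range, Finset.mem_Icc]
    constructor
    · rintro ⟨b, hb, rfl⟩; omega
    · intro ⟨h0, h1⟩
      refine ⟨a.toNat, by omega, by omega⟩
  rw [← himg, Finset.sum_image (fun a _ b _ hab => by exact_mod_cast hab)]

lemma oneD_int (n : ℕ) (hn : 2 ≤ n) (g : ℤ → ℝ) :
    2 * (1 - Real.cos (π/n)) *
        ∑ j ∈ Finset.Icc (0:ℤ) ((n:ℤ)-1), (g j - (n:ℝ)⁻¹ * ∑ j' ∈ Finset.Icc (0:ℤ) ((n:ℤ)-1), g j') ^ 2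
      ≤ ∑ j ∈ Finset.Icc (0:ℤ) ((n:ℤ)-2), (g (j+1) - g j) ^ 2 := by
  have h2 : ((n:ℤ)-2) = ((n-1:ℕ):ℤ)-1 := by omega
  rw [h2, sum_Icc_int (n-1) (fun j => (g (j+1) - g j)^2), sum_Icc_int n,
      sum_Icc_int n (fun j => g j)]
  have := oneD_nat n hn (fun j : ℕ => g (j:ℤ))
  push_cast at this ⊢
  exact this


lemma sum_grid3 (s0 s1 s2 : Finset ℤ) (G : (Fin 3 → ℤ) → ℝ)
    (T : Finset (Fin 3 → ℤ)) (hT : ∀ k, k ∈ T ↔ k 0 ∈ s0 ∧ k 1 ∈ s1 ∧ k 2 ∈ s2) :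
    ∑ k ∈ T, G k = ∑ a ∈ s0, ∑ b ∈ s1, ∑ c ∈ s2, G ![a,b,c] := by
  calc ∑ k ∈ T, G k = ∑ p ∈ s0 ×ˢ (s1 ×ˢ s2), G ![p.1, p.2.1, p.2.2] := by
        apply Finset.sum_nbij' (i := fun k => (k 0, (k 1, k 2)))
          (j := fun p => ![p.1, p.2.1, p.2.2])
        · intro k hk
          rw [hT] at hk
          simp [Finset.mem_product, hk.1, hk.2.1, hk.2.2]
        · intro p hp
          simp only [Finset.mem_product] at hp
          rw [hT]
          refine ⟨by simp [hp.1], by simp [hp.1, hp.2], by simp [hp.2]⟩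
        · intro k _
          funext i
          fin_cases i <;> simp
        · intro p _
          simp
        · intro k _
          congr 1
          funext i
          fin_cases i <;> simp
    _ = ∑ a ∈ s0, ∑ p ∈ s1 ×ˢ s2, G ![a, p.1, p.2] := Finset.sum_product _ _ _
    _ = ∑ a ∈ s0, ∑ b ∈ s1, ∑ c ∈ s2, G ![a,b,c] :=
        Finset.sum_congr rfl (fun a _ => Finset.sum_product _ _ _)


lemma sum3_comm (s t u : Finset ℤ) (g : ℤ → ℤ → ℤ → ℝ) :
    ∑ a ∈ s, ∑ b ∈ t, ∑ c ∈ u, g a b c = ∑ c ∈ u, ∑ b ∈ t, ∑ a ∈ s, g a b c := by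
  rw [Finset.sum_comm]
  refine Eq.trans (Finset.sum_congr rfl fun b _ => Finset.sum_comm) ?_
  exact Finset.sum_comm

lemma core (n : ℕ) (hn : 2 ≤ n) (F : ℤ → ℤ → ℤ → ℝ) :
    2 * (1 - Real.cos (π/n)) *
        ∑ a ∈ Finset.Icc (0:ℤ) ((n:ℤ)-1), ∑ b ∈ Finset.Icc (0:ℤ) ((n:ℤ)-1),
          ∑ c ∈ Finset.Icc (0:ℤ) ((n:ℤ)-1),
            (F a b c - ((n:ℝ)^3)⁻¹ * ∑ a' ∈ Finset.Icc (0:ℤ) ((n:ℤ)-1),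
              ∑ b' ∈ Finset.Icc (0:ℤ) ((n:ℤ)-1), ∑ c' ∈ Finset.Icc (0:ℤ) ((n:ℤ)-1), F a' b' c') ^ 2
      ≤ (∑ a ∈ Finset.Icc (0:ℤ) ((n:ℤ)-2), ∑ b ∈ Finset.Icc (0:ℤ) ((n:ℤ)-1),
            ∑ c ∈ Finset.Icc (0:ℤ) ((n:ℤ)-1), (F (a+1) b c - F a b c) ^ 2)
        + (∑ a ∈ Finset.Icc (0:ℤ) ((n:ℤ)-1), ∑ b ∈ Finset.Icc (0:ℤ) ((n:ℤ)-2),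
            ∑ c ∈ Finset.Icc (0:ℤ) ((n:ℤ)-1), (F a (b+1) c - F a b c) ^ 2)
        + (∑ a ∈ Finset.Icc (0:ℤ) ((n:ℤ)-1), ∑ b ∈ Finset.Icc (0:ℤ) ((n:ℤ)-1),
            ∑ c ∈ Finset.Icc (0:ℤ) ((n:ℤ)-2), (F a b (c+1) - F a b c) ^ 2) := by
  have hnR : (0:ℝ) < (n:ℝ) := by positivity
  have hnne : (n:ℝ) ≠ 0 := ne_of_gt hnR
  set I : Finset ℤ := Finset.Icc (0:ℤ) ((n:ℤ)-1) with hI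
  set I' : Finset ℤ := Finset.Icc (0:ℤ) ((n:ℤ)-2) with hI'
  have hcard : (I.card : ℝ) = (n:ℝ) := by
    rw [hI, Int.card_Icc]
    norm_num
  set A1 : ℤ → ℤ → ℝ := fun b c => (n:ℝ)⁻¹ * ∑ a ∈ I, F a b c with hA1
  set A2 : ℤ → ℝ := fun c => (n:ℝ)⁻¹ * ∑ b ∈ I, A1 b c with hA2
  set μ : ℝ := (n:ℝ)⁻¹ * ∑ c ∈ I, A2 c with hμ
  -- lambda
  set lam : ℝ := 2 * (1 - Real.cos (π/n)) with hlam
  have hlamnn : 0 ≤ lam := by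
    have := Real.cos_le_one (π/n)
    rw [hlam]; linarith
  -- the grand mean
  have hmean : ((n:ℝ)^3)⁻¹ * ∑ a ∈ I, ∑ b ∈ I, ∑ c ∈ I, F a b c = μ := by
    rw [sum3_comm I I I F]
    simp only [hμ, hA2, hA1, Finset.mul_sum]
    refine Finset.sum_congr rfl fun c _ => ?_
    refine Finset.sum_congr rfl fun b _ => ?_
    refine Finset.sum_congr rfl fun a _ => ?_
    rw [← inv_pow]
    ring
  -- cancellation keys
  have key1 : ∀ b c, ∑ a ∈ I, (F a b c - A1 b c) = 0 := by
    intro b c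
    rw [Finset.sum_sub_distrib, Finset.sum_const, nsmul_eq_mul, hcard, hA1]
    field_simp
    ring
  have key2 : ∀ c, ∑ b ∈ I, (A1 b c - A2 c) = 0 := by
    intro c
    rw [Finset.sum_sub_distrib, Finset.sum_const, nsmul_eq_mul, hcard, hA2]
    field_simp
    ring
  -- Pythagoras
  set Q1 : ℝ := ∑ c ∈ I, ∑ b ∈ I, ∑ a ∈ I, (F a b c - A1 b c)^2 with hQ1
  set Q2 : ℝ := ∑ c ∈ I, ∑ b ∈ I, (A1 b c - A2 c)^2 with hQ2
  set Q3 : ℝ := ∑ c ∈ I, (A2 c - μ)^2 with hQ3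
  have hsplit1 : ∀ b c, ∑ a ∈ I, (F a b c - μ)^2
      = ∑ a ∈ I, (F a b c - A1 b c)^2
        + (n:ℝ) * ((A1 b c - A2 c)^2 + (A2 c - μ)^2 + 2*(A1 b c - A2 c)*(A2 c - μ)) := by
    intro b c
    have hpt : ∀ a : ℤ, (F a b c - μ)^2
        = (F a b c - A1 b c)^2
          + ((A1 b c - A2 c)^2 + (A2 c - μ)^2 + 2*(A1 b c - A2 c)*(A2 c - μ))
          + (2*((A1 b c - A2 c) + (A2 c - μ))) * (F a b c - A1 b c) := by
      intro a; ring
    rw [Finset.sum_congr rfl (fun a _ => hpt a), Finset.sum_add_distrib,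
        Finset.sum_add_distrib, Finset.sum_const, nsmul_eq_mul, hcard,
        ← Finset.mul_sum, key1]
    ring
  have hsplit2 : ∀ c, ∑ b ∈ I, ∑ a ∈ I, (F a b c - μ)^2
      = ∑ b ∈ I, ∑ a ∈ I, (F a b c - A1 b c)^2
        + (n:ℝ) * ∑ b ∈ I, (A1 b c - A2 c)^2
        + (n:ℝ)^2 * (A2 c - μ)^2 := by
    intro c
    rw [Finset.sum_congr rfl (fun b _ => hsplit1 b c)]
    rw [Finset.sum_add_distrib]
    have : ∑ b ∈ I, (n:ℝ) * ((A1 b c - A2 c)^2 + (A2 c - μ)^2 + 2*(A1 b c - A2 c)*(A2 c - μ))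
        = (n:ℝ) * ∑ b ∈ I, (A1 b c - A2 c)^2 + (n:ℝ)^2 * (A2 c - μ)^2
          + 2*(n:ℝ)*(A2 c - μ) * ∑ b ∈ I, (A1 b c - A2 c) := by
      rw [← Finset.mul_sum, Finset.sum_add_distrib, Finset.sum_add_distrib,
          Finset.sum_const, nsmul_eq_mul, hcard]
      have hpull : ∑ x ∈ I, 2*(A1 x c - A2 c)*(A2 c - μ) = 2*(A2 c - μ) * ∑ x ∈ I, (A1 x c - A2 c) := by
        rw [Finset.mul_sum]; exact Finset.sum_congr rfl fun x _ => by ring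
      rw [hpull]
      ring
    rw [this, key2]
    ring
  have hPyth : ∑ c ∈ I, ∑ b ∈ I, ∑ a ∈ I, (F a b c - μ)^2
      = Q1 + (n:ℝ) * Q2 + (n:ℝ)^2 * Q3 := by
    rw [Finset.sum_congr rfl (fun c _ => hsplit2 c), Finset.sum_add_distrib,
        Finset.sum_add_distrib, ← Finset.mul_sum, ← Finset.mul_sum, hQ1, hQ2, hQ3]
  -- Cauchy-Schwarz averaging
  have hCS : ∀ d : ℤ → ℝ, (n:ℝ) * ((n:ℝ)⁻¹ * ∑ a ∈ I, d a)^2 ≤ ∑ a ∈ I, d a ^ 2 := by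
    intro d
    have h := sq_sum_le_card_mul_sum_sq (s := I) (f := d)
    rw [hcard] at h
    have hn2 : (0:ℝ) < (n:ℝ)⁻¹ := by positivity
    calc (n:ℝ) * ((n:ℝ)⁻¹ * ∑ a ∈ I, d a)^2 = (n:ℝ)⁻¹ * (∑ a ∈ I, d a)^2 := by
          field_simp
      _ ≤ (n:ℝ)⁻¹ * ((n:ℝ) * ∑ a ∈ I, d a ^ 2) := by
          apply mul_le_mul_of_nonneg_left _ (le_of_lt hn2)
          exact_mod_cast h
      _ = ∑ a ∈ I, d a ^ 2 := by field_simp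
  -- bound 1
  have hB1 : lam * Q1 ≤ ∑ c ∈ I, ∑ b ∈ I, ∑ a ∈ I', (F (a+1) b c - F a b c)^2 := by
    rw [hQ1, Finset.mul_sum]
    apply Finset.sum_le_sum; intro c _
    rw [Finset.mul_sum]
    apply Finset.sum_le_sum; intro b _
    have := oneD_int n hn (fun a => F a b c)
    simpa [← hI, ← hI', ← hA1, ← hlam] using this
  -- bound 2
  have hB2 : lam * ((n:ℝ) * Q2) ≤ ∑ c ∈ I, ∑ b ∈ I', ∑ a ∈ I, (F a (b+1) c - F a b c)^2 := by
    have step1 : ∀ c, lam * ∑ b ∈ I, (A1 b c - A2 c)^2 ≤ ∑ b ∈ I', (A1 (b+1) c - A1 b c)^2 := by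
      intro c
      have := oneD_int n hn (fun b => A1 b c)
      simpa [← hI, ← hI', ← hA2, ← hlam] using this
    have step2 : ∀ c, ∀ b, (n:ℝ) * (A1 (b+1) c - A1 b c)^2 ≤ ∑ a ∈ I, (F a (b+1) c - F a b c)^2 := by
      intro c b
      have hd : A1 (b+1) c - A1 b c = (n:ℝ)⁻¹ * ∑ a ∈ I, (F a (b+1) c - F a b c) := by
        rw [hA1]
        simp only []
        rw [Finset.sum_sub_distrib]
        ring
      rw [hd]
      exact hCS _
    calc lam * ((n:ℝ) * Q2) = ∑ c ∈ I, (n:ℝ) * (lam * ∑ b ∈ I, (A1 b c - A2 c)^2) := by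
          rw [hQ2, Finset.mul_sum, Finset.mul_sum]
          apply Finset.sum_congr rfl; intro c _; ring
      _ ≤ ∑ c ∈ I, (n:ℝ) * ∑ b ∈ I', (A1 (b+1) c - A1 b c)^2 := by
          apply Finset.sum_le_sum; intro c _
          exact mul_le_mul_of_nonneg_left (step1 c) (le_of_lt hnR)
      _ = ∑ c ∈ I, ∑ b ∈ I', (n:ℝ) * (A1 (b+1) c - A1 b c)^2 := by
          apply Finset.sum_congr rfl; intro c _; rw [Finset.mul_sum]
      _ ≤ ∑ c ∈ I, ∑ b ∈ I', ∑ a ∈ I, (F a (b+1) c - F a b c)^2 := by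
          apply Finset.sum_le_sum; intro c _
          apply Finset.sum_le_sum; intro b _
          exact step2 c b
  -- bound 3
  have hB3 : lam * ((n:ℝ)^2 * Q3) ≤ ∑ c ∈ I', ∑ b ∈ I, ∑ a ∈ I, (F a b (c+1) - F a b c)^2 := by
    have step1 : lam * ∑ c ∈ I, (A2 c - μ)^2 ≤ ∑ c ∈ I', (A2 (c+1) - A2 c)^2 := by
      have := oneD_int n hn A2
      simpa [← hI, ← hI', ← hμ, ← hlam] using this
    have step2 : ∀ c, (n:ℝ)^2 * (A2 (c+1) - A2 c)^2 ≤ ∑ b ∈ I, ∑ a ∈ I, (F a b (c+1) - F a b c)^2 := by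
      intro c
      have hd : A2 (c+1) - A2 c = (n:ℝ)⁻¹ * ∑ b ∈ I, (A1 b (c+1) - A1 b c) := by
        rw [hA2]
        simp only []
        rw [Finset.sum_sub_distrib]
        ring
      calc (n:ℝ)^2 * (A2 (c+1) - A2 c)^2
          = (n:ℝ) * ((n:ℝ) * ((n:ℝ)⁻¹ * ∑ b ∈ I, (A1 b (c+1) - A1 b c))^2) := by
            rw [hd]; ring
        _ ≤ (n:ℝ) * ∑ b ∈ I, (A1 b (c+1) - A1 b c)^2 :=
            mul_le_mul_of_nonneg_left (hCS _) (le_of_lt hnR)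
        _ = ∑ b ∈ I, (n:ℝ) * (A1 b (c+1) - A1 b c)^2 := Finset.mul_sum _ _ _
        _ ≤ ∑ b ∈ I, ∑ a ∈ I, (F a b (c+1) - F a b c)^2 := by
            apply Finset.sum_le_sum; intro b _
            have hd2 : A1 b (c+1) - A1 b c = (n:ℝ)⁻¹ * ∑ a ∈ I, (F a b (c+1) - F a b c) := by
              rw [hA1]
              simp only []
              rw [Finset.sum_sub_distrib]
              ring
            rw [hd2]
            exact hCS _
    calc lam * ((n:ℝ)^2 * Q3) = (n:ℝ)^2 * (lam * ∑ c ∈ I, (A2 c - μ)^2) := by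
          rw [hQ3]; ring
      _ ≤ (n:ℝ)^2 * ∑ c ∈ I', (A2 (c+1) - A2 c)^2 := by
          apply mul_le_mul_of_nonneg_left step1 (by positivity)
      _ = ∑ c ∈ I', (n:ℝ)^2 * (A2 (c+1) - A2 c)^2 := Finset.mul_sum _ _ _
      _ ≤ ∑ c ∈ I', ∑ b ∈ I, ∑ a ∈ I, (F a b (c+1) - F a b c)^2 :=
          Finset.sum_le_sum (fun c _ => step2 c)
  -- assemble
  rw [sum3_comm I I I (fun a b c => (F a b c - ((n:ℝ)^3)⁻¹ * ∑ a' ∈ I, ∑ b' ∈ I, ∑ c' ∈ I, F a' b' c')^2)]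
  rw [sum3_comm I' I I (fun a b c => (F (a+1) b c - F a b c)^2),
      sum3_comm I I' I (fun a b c => (F a (b+1) c - F a b c)^2),
      sum3_comm I I I' (fun a b c => (F a b (c+1) - F a b c)^2)]
  have hgoal : ∑ c ∈ I, ∑ b ∈ I, ∑ a ∈ I,
      (F a b c - ((n:ℝ)^3)⁻¹ * ∑ a' ∈ I, ∑ b' ∈ I, ∑ c' ∈ I, F a' b' c')^2
      = Q1 + (n:ℝ) * Q2 + (n:ℝ)^2 * Q3 := by
    rw [← hPyth]
    apply Finset.sum_congr rfl; intro c _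
    apply Finset.sum_congr rfl; intro b _
    apply Finset.sum_congr rfl; intro a _
    rw [hmean]
  rw [hgoal]
  have := add_le_add (add_le_add hB1 hB2) hB3
  calc lam * (Q1 + (n:ℝ) * Q2 + (n:ℝ)^2 * Q3)
      = lam * Q1 + lam * ((n:ℝ) * Q2) + lam * ((n:ℝ)^2 * Q3) := by ring
    _ ≤ _ := this


/-- Spectral gap of the nearest-neighbour discrete Neumann Laplacian on the `n×n×n` grid:
`Σ_i Σ_{k : k_i ≤ n−2} (f(k+e_i) − f(k))² ≥ 2(1 − cos(π/n)) Σ_k (f(k) − f̄)²`. -/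
theorem grid_spectral_gap (n : ℕ) (hn : 2 ≤ n) (f : (Fin 3 → ℤ) → ℝ) :
    (∑ i : Fin 3,
        ∑ k ∈ (Finset.Icc (0 : Fin 3 → ℤ) (fun _ => (n : ℤ) - 1)).filter
            (fun k => k i ≤ (n : ℤ) - 2),
          (f (fun j => k j + if j = i then 1 else 0) - f k) ^ 2)
      ≥ 2 * (1 - Real.cos (π / n)) *
        ∑ k ∈ Finset.Icc (0 : Fin 3 → ℤ) (fun _ => (n : ℤ) - 1),
          (f k - ((n : ℝ) ^ 3)⁻¹ *
            ∑ k' ∈ Finset.Icc (0 : Fin 3 → ℤ) (fun _ => (n : ℤ) - 1), f k') ^ 2 := by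
  have hmemgrid : ∀ k : Fin 3 → ℤ, k ∈ Finset.Icc (0 : Fin 3 → ℤ) (fun _ => (n : ℤ) - 1) ↔
      (k 0 ∈ Finset.Icc (0:ℤ) ((n:ℤ)-1) ∧ k 1 ∈ Finset.Icc (0:ℤ) ((n:ℤ)-1)
        ∧ k 2 ∈ Finset.Icc (0:ℤ) ((n:ℤ)-1)) := by
    intro k
    rw [Finset.mem_Icc]
    simp only [Finset.mem_Icc, Pi.le_def, Pi.zero_apply]
    constructor
    · rintro ⟨h1, h2⟩; exact ⟨⟨h1 0, h2 0⟩, ⟨h1 1, h2 1⟩, ⟨h1 2, h2 2⟩⟩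
    · rintro ⟨⟨a0,a1⟩,⟨b0,b1⟩,⟨c0,c1⟩⟩
      constructor <;> intro i <;> fin_cases i <;> assumption
  have hchar0 : ∀ k : Fin 3 → ℤ,
      k ∈ (Finset.Icc (0 : Fin 3 → ℤ) (fun _ => (n : ℤ) - 1)).filter (fun k => k 0 ≤ (n:ℤ)-2) ↔
      (k 0 ∈ Finset.Icc (0:ℤ) ((n:ℤ)-2) ∧ k 1 ∈ Finset.Icc (0:ℤ) ((n:ℤ)-1)
        ∧ k 2 ∈ Finset.Icc (0:ℤ) ((n:ℤ)-1)) := by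
    intro k
    rw [Finset.mem_filter, hmemgrid k]
    simp only [Finset.mem_Icc]
    omega
  have hchar1 : ∀ k : Fin 3 → ℤ,
      k ∈ (Finset.Icc (0 : Fin 3 → ℤ) (fun _ => (n : ℤ) - 1)).filter (fun k => k 1 ≤ (n:ℤ)-2) ↔
      (k 0 ∈ Finset.Icc (0:ℤ) ((n:ℤ)-1) ∧ k 1 ∈ Finset.Icc (0:ℤ) ((n:ℤ)-2)
        ∧ k 2 ∈ Finset.Icc (0:ℤ) ((n:ℤ)-1)) := by
    intro k
    rw [Finset.mem_filter, hmemgrid k]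
    simp only [Finset.mem_Icc]
    omega
  have hchar2 : ∀ k : Fin 3 → ℤ,
      k ∈ (Finset.Icc (0 : Fin 3 → ℤ) (fun _ => (n : ℤ) - 1)).filter (fun k => k 2 ≤ (n:ℤ)-2) ↔
      (k 0 ∈ Finset.Icc (0:ℤ) ((n:ℤ)-1) ∧ k 1 ∈ Finset.Icc (0:ℤ) ((n:ℤ)-1)
        ∧ k 2 ∈ Finset.Icc (0:ℤ) ((n:ℤ)-2)) := by
    intro k
    rw [Finset.mem_filter, hmemgrid k]
    simp only [Finset.mem_Icc]
    omega
  have e0 : ∀ a b c : ℤ, (fun j => (![a,b,c]) j + if j = (0:Fin 3) then 1 else 0) = ![a+1,b,c] := by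
    intro a b c; funext j; fin_cases j <;> simp
  have e1 : ∀ a b c : ℤ, (fun j => (![a,b,c]) j + if j = (1:Fin 3) then 1 else 0) = ![a,b+1,c] := by
    intro a b c; funext j; fin_cases j <;> simp
  have e2 : ∀ a b c : ℤ, (fun j => (![a,b,c]) j + if j = (2:Fin 3) then 1 else 0) = ![a,b,c+1] := by
    intro a b c; funext j; fin_cases j <;> simp
  have hmean : ∑ k' ∈ Finset.Icc (0 : Fin 3 → ℤ) (fun _ => (n : ℤ) - 1), f k'
      = ∑ a ∈ Finset.Icc (0:ℤ) ((n:ℤ)-1), ∑ b ∈ Finset.Icc (0:ℤ) ((n:ℤ)-1),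
          ∑ c ∈ Finset.Icc (0:ℤ) ((n:ℤ)-1), f ![a,b,c] :=
    sum_grid3 _ _ _ f _ hmemgrid
  rw [ge_iff_le, Fin.sum_univ_three]
  rw [sum_grid3 _ _ _ _ _ hchar0, sum_grid3 _ _ _ _ _ hchar1, sum_grid3 _ _ _ _ _ hchar2,
      sum_grid3 _ _ _ _ _ hmemgrid]
  simp only [hmean, e0, e1, e2]
  have := core n hn (fun a b c => f ![a,b,c])
  convert this using 2
end

section
/- There exists a constant C > 0 such that for all integers M ≥ 2, m and k with 0 ≤ m ≤ M/2 and 0 ≤ k ≤ M − m − 2, one has Σ_{n=0}^{⌊M/2⌋} dist( (k+1)(m−n) / (M−m), ℤ ) ≥ C · M, where dist(t, ℤ) = min_{j ∈ ℤ} |t − j| is the distance to the nearest integer. -/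
open Real Finset

noncomputable def dI (x : ℝ) : ℝ := |x - round x|

lemma dI_nonneg (x : ℝ) : 0 ≤ dI x := abs_nonneg _

lemma dI_add_int (x : ℝ) (k : ℤ) : dI (x + k) = dI x := by
  unfold dI
  rw [round_add_intCast]
  push_cast
  ring_nf

lemma dI_min (x : ℝ) (k : ℤ) : dI x ≤ |x - k| := by
  rcases eq_or_ne k (round x) with rfl | h
  · exact le_of_eq rfl
  · have h1 : |x - round x| ≤ 1 / 2 := abs_sub_round x
    have h2 : (1 : ℝ) ≤ |(k : ℝ) - round x| := by
      have hz : k - round x ≠ 0 := sub_ne_zero.mpr h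
      have := Int.one_le_abs hz
      calc (1:ℝ) = ((1:ℤ):ℝ) := by norm_num
      _ ≤ ((|k - round x| : ℤ) : ℝ) := by exact_mod_cast this
      _ = |(k:ℝ) - round x| := by push_cast; rfl
    have h3 : |(k:ℝ) - round x| ≤ |(k:ℝ) - x| + |x - round x| := by
      have := abs_sub_le ((k:ℝ)) x (round x)
      linarith [this]
    have h4 : |x - (k:ℝ)| = |(k:ℝ) - x| := abs_sub_comm _ _
    unfold dI
    linarith

lemma dI_neg (x : ℝ) : dI (-x) = dI x := by
  apply le_antisymm
  · calc dI (-x) ≤ |(-x) - ((-round x : ℤ) : ℝ)| := dI_min _ _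
    _ = |x - round x| := by push_cast; rw [← abs_neg]; ring_nf
    _ = dI x := rfl
  · calc dI x ≤ |x - ((-round (-x) : ℤ) : ℝ)| := dI_min _ _
    _ = |(-x) - round (-x)| := by push_cast; rw [← abs_neg]; ring_nf
    _ = dI (-x) := rfl

lemma dI_lb (q v T : ℕ) (hq : 0 < q) (h1 : T + 1 ≤ v) (h2 : v + T + 1 ≤ q) :
    ((T : ℝ) + 1) / q ≤ dI ((v : ℝ) / q) := by
  have hq' : (0:ℝ) < q := by exact_mod_cast hq
  have hA : ((T:ℝ) + 1) / q ≤ (v:ℝ) / q := by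
    gcongr
    exact_mod_cast h1
  have hB : ((T:ℝ) + 1) / q + (v:ℝ) / q ≤ 1 := by
    rw [← add_div, div_le_one hq']
    have : ((v:ℝ) + T + 1) ≤ q := by exact_mod_cast h2
    linarith
  unfold dI
  set r := round ((v:ℝ)/q) with hr
  rcases le_or_gt r 0 with h | h
  · have hrr : (r:ℝ) ≤ 0 := by exact_mod_cast h
    have := le_abs_self ((v:ℝ)/q - r)
    linarith
  · have hrr : (1:ℝ) ≤ r := by exact_mod_cast h
    have := neg_abs_le ((v:ℝ)/q - r)
    linarith

lemma dI_mod (q : ℕ) [NeZero q] (z : ℤ) :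
    dI ((z : ℝ) / q) = dI ((((z : ZMod q).val : ℕ) : ℝ) / q) := by
  have hq : (q:ℝ) ≠ 0 := by
    exact_mod_cast (NeZero.ne q)
  obtain ⟨c, hc⟩ : (q:ℤ) ∣ z - ((z : ZMod q).val : ℤ) := by
    rw [← ZMod.intCast_zmod_eq_zero_iff_dvd]
    push_cast
    rw [ZMod.natCast_val, ZMod.cast_id, sub_self]
  have hz : (z:ℝ) = ((z : ZMod q).val : ℝ) + q * c := by
    have : (z:ℝ) - ((z : ZMod q).val : ℝ) = (q:ℝ) * c := by exact_mod_cast congrArg (Int.cast : ℤ → ℝ) hc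
    linarith
  rw [hz]
  have : (((z : ZMod q).val : ℝ) + ↑q * ↑c) / q = ((z : ZMod q).val : ℝ) / q + (c:ℤ) := by
    field_simp
  rw [this, dI_add_int]

lemma count_lemma (q T : ℕ) [NeZero q] (S : Finset (ZMod q)) :
    ((S.card : ℝ) - (2 * T + 1)) * (((T:ℝ) + 1) / q) ≤ ∑ x ∈ S, dI ((x.val : ℝ) / q) := by
  classical
  have hq : 0 < q := Nat.pos_of_ne_zero (NeZero.ne q)
  have hq' : (0:ℝ) < q := by exact_mod_cast hq
  set B := S.filter (fun x : ZMod q => x.val ≤ T ∨ q ≤ x.val + T) with hB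
  have hcardB : B.card ≤ 2 * T + 1 := by
    have himg : B.image (ZMod.val) ⊆ Finset.range (T+1) ∪ Finset.Ico (q - T) q := by
      intro v hv
      simp only [Finset.mem_image] at hv
      obtain ⟨x, hx, rfl⟩ := hv
      have hx' := Finset.mem_filter.mp hx
      have hlt : x.val < q := ZMod.val_lt x
      rcases hx'.2 with h | h
      · exact Finset.mem_union_left _ (Finset.mem_range.mpr (by omega))
      · exact Finset.mem_union_right _ (Finset.mem_Ico.mpr (by omega))
    have h1 : (B.image ZMod.val).card = B.card :=
      Finset.card_image_of_injective _ (ZMod.val_injective q)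
    calc B.card = (B.image ZMod.val).card := h1.symm
    _ ≤ (Finset.range (T+1) ∪ Finset.Ico (q - T) q).card := Finset.card_le_card himg
    _ ≤ (Finset.range (T+1)).card + (Finset.Ico (q - T) q).card := Finset.card_union_le _ _
    _ ≤ (T + 1) + T := by
        simp only [Finset.card_range, Nat.card_Ico]
        omega
    _ = 2 * T + 1 := by ring
  have hgood : ∀ x ∈ S \ B, ((T:ℝ) + 1) / q ≤ dI ((x.val : ℝ) / q) := by
    intro x hx
    rw [Finset.mem_sdiff] at hx
    have hnot : ¬ (x.val ≤ T ∨ q ≤ x.val + T) := by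
      intro h
      exact hx.2 (Finset.mem_filter.mpr ⟨hx.1, h⟩)
    push_neg at hnot
    exact dI_lb q x.val T hq (by omega) (by omega)
  have hsub : ∑ x ∈ S \ B, dI ((x.val : ℝ) / q) ≤ ∑ x ∈ S, dI ((x.val : ℝ) / q) := by
    apply Finset.sum_le_sum_of_subset_of_nonneg (Finset.sdiff_subset)
    intro i _ _
    exact dI_nonneg _
  have hcount : ((S \ B).card : ℝ) * (((T:ℝ) + 1) / q) ≤ ∑ x ∈ S \ B, dI ((x.val : ℝ) / q) := by
    have := Finset.card_nsmul_le_sum (S \ B) (fun x => dI ((x.val : ℝ) / q)) (((T:ℝ) + 1) / q) hgood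
    simpa [nsmul_eq_mul] using this
  have hcard : (S.card : ℝ) - (2 * T + 1) ≤ ((S \ B).card : ℝ) := by
    have h1 : S.card - B.card ≤ (S \ B).card := Finset.le_card_sdiff B S
    have h2 : B.card ≤ S.card ∨ S.card ≤ B.card := le_total _ _ |>.symm.imp id id
    have h3 : ((S \ B).card : ℕ) + B.card ≥ S.card := by
      have := Finset.card_sdiff_add_card_eq_card (show B ⊆ S from Finset.filter_subset _ S)
      omega
    have : (S.card : ℝ) ≤ ((S \ B).card : ℝ) + B.card := by exact_mod_cast h3
    have hb : (B.card : ℝ) ≤ 2 * T + 1 := by exact_mod_cast hcardB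
    linarith
  calc ((S.card : ℝ) - (2 * T + 1)) * (((T:ℝ) + 1) / q)
      ≤ ((S \ B).card : ℝ) * (((T:ℝ) + 1) / q) := by
        apply mul_le_mul_of_nonneg_right hcard (by positivity)
    _ ≤ ∑ x ∈ S \ B, dI ((x.val : ℝ) / q) := hcount
    _ ≤ ∑ x ∈ S, dI ((x.val : ℝ) / q) := hsub

lemma caseA (q a : ℕ) [NeZero q] (ha : Nat.Coprime a q) (t : ℤ) (N T : ℕ) (hN : N ≤ q) :
    ((N : ℝ) - (2 * T + 1)) * (((T:ℝ) + 1) / q) ≤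
      ∑ j ∈ Finset.range N, dI (((a * (t + j) : ℤ) : ℝ) / q) := by
  classical
  set e : ℕ → ZMod q := fun j => ((a * (t + j) : ℤ) : ZMod q) with he
  have hterm : ∀ j : ℕ, dI (((a * (t + j) : ℤ) : ℝ) / q) = dI (((e j).val : ℝ) / q) := by
    intro j
    rw [dI_mod]
  have hu : IsUnit ((a : ℤ) : ZMod q) := by
    have := (ZMod.unitOfCoprime a ha).isUnit
    simpa using this
  have hinj : ∀ i ∈ Finset.range N, ∀ j ∈ Finset.range N, e i = e j → i = j := by
    intro i hi j hj hij
    simp only [Finset.mem_range] at hi hj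
    have h1 : ((a : ℤ) : ZMod q) * ((t + i : ℤ) : ZMod q) = ((a : ℤ) : ZMod q) * ((t + j : ℤ) : ZMod q) := by
      simpa [he, Int.cast_mul] using hij
    have h2 : ((t + i : ℤ) : ZMod q) = ((t + j : ℤ) : ZMod q) := hu.mul_left_cancel h1
    have h3 : ((i : ℕ) : ZMod q) = ((j : ℕ) : ZMod q) := by
      have := add_left_cancel (a := ((t : ℤ) : ZMod q)) (by push_cast at h2 ⊢; exact h2)
      exact_mod_cast this
    have h4 : (ZMod.val ((i : ℕ) : ZMod q)) = ZMod.val ((j : ℕ) : ZMod q) := by rw [h3]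
    rwa [ZMod.val_cast_of_lt (by omega), ZMod.val_cast_of_lt (by omega)] at h4
  set S := (Finset.range N).image e with hS
  have hcard : S.card = N := by
    rw [hS, Finset.card_image_of_injOn hinj, Finset.card_range]
  have hsum : ∑ x ∈ S, dI ((x.val : ℝ) / q) = ∑ j ∈ Finset.range N, dI (((a * (t + j) : ℤ) : ℝ) / q) := by
    rw [hS, Finset.sum_image hinj]
    exact Finset.sum_congr rfl (fun j _ => (hterm j).symm)
  rw [← hsum, ← hcard]
  exact count_lemma q T S

lemma sum_chunks (F : ℕ → ℝ) (q K : ℕ) :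
    ∑ j ∈ Finset.range (K * q), F j = ∑ i ∈ Finset.range K, ∑ j ∈ Finset.range q, F (i * q + j) := by
  induction K with
  | zero => simp
  | succ K ih =>
    rw [Finset.sum_range_succ, ← ih, Nat.succ_mul, Finset.sum_range_add]

lemma L32 (n : ℕ) (hn : 2 ≤ n) :
    (n:ℝ) * n ≤ 32 * (((n:ℝ) - (2 * ((n/4 : ℕ) : ℝ) + 1)) * (((n/4 : ℕ) : ℝ) + 1)) := by
  have h1 : 4 * (n/4) ≤ n := by omega
  have h2 : n ≤ 4 * (n/4) + 3 := by omega
  have hr1 : 4 * ((n/4 : ℕ) : ℝ) ≤ (n:ℝ) := by exact_mod_cast h1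
  have hr2 : (n:ℝ) ≤ 4 * ((n/4 : ℕ) : ℝ) + 3 := by exact_mod_cast h2
  rcases eq_or_lt_of_le hn with h | h
  · have : n = 2 := h.symm
    subst this
    norm_num
  · have hn3 : (3:ℝ) ≤ (n:ℝ) := by exact_mod_cast h
    nlinarith [mul_nonneg (sub_nonneg.mpr hr1) (sub_nonneg.mpr hr2), sq_nonneg ((n:ℝ) - 3)]

lemma blockA (q a N : ℕ) [NeZero q] (ha : Nat.Coprime a q) (t : ℤ) (hN2 : 2 ≤ N) (hN : N ≤ q) :
    (N:ℝ) * N / (32 * q) ≤ ∑ j ∈ Finset.range N, dI (((a * (t + j) : ℤ) : ℝ) / q) := by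
  have hq : 0 < q := Nat.pos_of_ne_zero (NeZero.ne q)
  have hq' : (0:ℝ) < q := by exact_mod_cast hq
  have h := caseA q a ha t N (N/4) hN
  have h2 := L32 N hN2
  have key : (N:ℝ) * N / 32 ≤ ((N:ℝ) - (2 * ((N/4:ℕ):ℝ) + 1)) * (((N/4:ℕ):ℝ) + 1) := by
    linarith
  calc (N:ℝ) * N / (32 * q) = ((N:ℝ) * N / 32) / q := by ring
  _ ≤ (((N:ℝ) - (2 * ((N/4:ℕ):ℝ) + 1)) * (((N/4:ℕ):ℝ) + 1)) / q :=
      (div_le_div_iff_of_pos_right hq').mpr key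
  _ = ((N:ℝ) - (2 * ((N/4:ℕ):ℝ) + 1)) * ((((N/4:ℕ):ℝ) + 1) / q) := by ring
  _ ≤ _ := h

lemma blockB (q a N : ℕ) [NeZero q] (hq2 : 2 ≤ q) (ha : Nat.Coprime a q) (t : ℤ) (hqN : q ≤ N) :
    (N:ℝ) / 64 ≤ ∑ j ∈ Finset.range N, dI (((a * (t + j) : ℤ) : ℝ) / q) := by
  have hq : 0 < q := by omega
  have hq' : (0:ℝ) < q := by exact_mod_cast hq
  set F : ℕ → ℝ := fun j => dI (((a * (t + j) : ℤ) : ℝ) / q) with hF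
  set K := N / q with hK
  have hKq : K * q ≤ N := Nat.div_mul_le_self N q
  have step1 : ∑ j ∈ Finset.range (K * q), F j ≤ ∑ j ∈ Finset.range N, F j :=
    Finset.sum_le_sum_of_subset_of_nonneg (Finset.range_subset_range.mpr hKq)
      (fun i _ _ => dI_nonneg _)
  have inner : ∀ i : ℕ, (q:ℝ) / 32 ≤ ∑ j ∈ Finset.range q, F (i * q + j) := by
    intro i
    have hrw : ∀ j : ℕ, F (i * q + j) = dI (((a * ((t + (i * q : ℕ)) + j) : ℤ) : ℝ) / q) := by
      intro j
      have harg : ((a : ℤ) * (t + ((i * q + j : ℕ) : ℤ)) : ℤ) =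
          (a : ℤ) * ((t + ((i * q : ℕ) : ℤ)) + (j : ℤ)) := by push_cast; ring
      simp only [hF]
      rw [harg]
    rw [Finset.sum_congr rfl (fun j _ => hrw j)]
    have h := blockA q a q ha (t + (i * q : ℕ)) hq2 le_rfl
    have heq : (q:ℝ) * q / (32 * q) = (q:ℝ) / 32 := by
      field_simp
    rw [heq] at h
    exact h
  have hsumK : (K:ℝ) * ((q:ℝ) / 32) ≤ ∑ i ∈ Finset.range K, ∑ j ∈ Finset.range q, F (i * q + j) := by
    have := Finset.card_nsmul_le_sum (Finset.range K)
      (fun i => ∑ j ∈ Finset.range q, F (i * q + j)) ((q:ℝ) / 32)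
      (fun i _ => inner i)
    simpa [nsmul_eq_mul] using this
  have hK1 : 1 ≤ K := (Nat.one_le_div_iff hq).mpr hqN
  have h2KqN : N ≤ 2 * (K * q) := by
    have hdm := Nat.div_add_mod N q
    have hle : q ≤ q * K := Nat.le_mul_of_pos_right q hK1
    have hmod : N % q < q := Nat.mod_lt _ hq
    obtain ⟨P, hP⟩ : ∃ P, q * K = P := ⟨_, rfl⟩
    have hP2 : K * q = P := by rw [← hP]; ring
    rw [hP2]
    rw [← hK, hP] at hdm
    rw [hP] at hle
    omega
  have hc : (N:ℝ) ≤ 2 * ((K:ℝ) * q) := by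
    have : ((N:ℕ):ℝ) ≤ ((2 * (K * q) : ℕ) : ℝ) := by exact_mod_cast h2KqN
    push_cast at this
    linarith
  calc (N:ℝ) / 64 ≤ (K:ℝ) * ((q:ℝ) / 32) := by linarith
  _ ≤ ∑ i ∈ Finset.range K, ∑ j ∈ Finset.range q, F (i * q + j) := hsumK
  _ = ∑ j ∈ Finset.range (K * q), F j := (sum_chunks F q K).symm
  _ ≤ ∑ j ∈ Finset.range N, F j := step1

/-- Equidistribution-type bound: there is `C > 0` such that for all integers `M ≥ 2`,
`0 ≤ m ≤ M/2` and `0 ≤ k ≤ M − m − 2`,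
`Σ_{n=0}^{⌊M/2⌋} dist((k+1)(m−n)/(M−m), ℤ) ≥ C M`. -/
theorem distance_sum_lower_bound :
    ∃ C > (0 : ℝ), ∀ M m k : ℕ, 2 ≤ M → 2 * m ≤ M → k + m + 2 ≤ M →
      (∑ n ∈ Finset.range (M / 2 + 1),
          |((k : ℝ) + 1) * ((m : ℝ) - (n : ℝ)) / ((M : ℝ) - (m : ℝ)) -
            round (((k : ℝ) + 1) * ((m : ℝ) - (n : ℝ)) / ((M : ℝ) - (m : ℝ)))|)
        ≥ C * M := by
  refine ⟨1/128, by norm_num, ?_⟩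
  intro M m k hM hm hk
  set N := M / 2 + 1 with hN
  have hmM : m ≤ M := by omega
  set a := k + 1 with ha
  set q0 := M - m with hq0e
  have haq0 : a + 1 ≤ q0 := by omega
  set d := Nat.gcd a q0 with hd
  have hdpos : 0 < d := Nat.gcd_pos_of_pos_left _ (by omega)
  set a1 := a / d with ha1
  set q1 := q0 / d with hq1
  have hda : d * a1 = a := Nat.mul_div_cancel' (Nat.gcd_dvd_left a q0)
  have hdq : d * q1 = q0 := Nat.mul_div_cancel' (Nat.gcd_dvd_right a q0)
  have hcop : Nat.Coprime a1 q1 := Nat.coprime_div_gcd_div_gcd hdpos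
  have hdvd_a : d ∣ a := Nat.gcd_dvd_left a q0
  clear_value N a q0 d a1 q1
  have hq12 : 2 ≤ q1 := by
    have hq1pos : q1 ≠ 0 := by
      intro h0
      rw [h0, Nat.mul_zero] at hdq
      omega
    rcases Nat.lt_or_ge q1 2 with h | h
    · exfalso
      have h1 : q1 = 1 := by omega
      rw [h1, Nat.mul_one] at hdq
      have hdvd : q0 ∣ a := hdq ▸ hdvd_a
      have := Nat.le_of_dvd (by omega) hdvd
      omega
    · exact h
  haveI : NeZero q1 := ⟨by omega⟩
  have hdne : (d:ℝ) ≠ 0 := by positivity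
  have hq1ne : (q1:ℝ) ≠ 0 := by
    have : 0 < q1 := by omega
    positivity
  have e1 : ((q0:ℕ):ℝ) = (M:ℝ) - m := by rw [hq0e, Nat.cast_sub hmM]
  have e2 : ((a:ℕ):ℝ) = (k:ℝ) + 1 := by rw [ha]; push_cast; ring
  have e3 : ((a:ℕ):ℝ) = (d:ℝ) * (a1:ℝ) := by exact_mod_cast hda.symm
  have e4 : ((q0:ℕ):ℝ) = (d:ℝ) * (q1:ℝ) := by exact_mod_cast hdq.symm
  have key : ∀ n : ℕ,
      |((k:ℝ)+1) * ((m:ℝ) - n) / ((M:ℝ) - m) - round (((k:ℝ)+1) * ((m:ℝ) - n) / ((M:ℝ) - m))|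
        = dI (((a1 * (-(m:ℤ) + n) : ℤ) : ℝ) / q1) := by
    intro n
    have hX : ((k:ℝ)+1) * ((m:ℝ) - n) / ((M:ℝ) - m)
        = -( ((a1 * (-(m:ℤ) + n) : ℤ) : ℝ) / q1 ) := by
      rw [← e1, ← e2, e3, e4]
      push_cast
      field_simp
      ring
    rw [hX]
    have hneg := dI_neg (((a1 * (-(m:ℤ) + n) : ℤ) : ℝ) / q1)
    unfold dI at hneg
    exact hneg
  rw [Finset.sum_congr rfl (fun n _ => key n), ge_iff_le]
  have hNM : M < 2 * N := by omega
  have hN2 : 2 ≤ N := by omega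
  have hq1q0 : q1 ≤ q0 := Nat.le_of_dvd (by omega) ⟨d, by rw [← hdq]; ring⟩
  have hq1M : q1 ≤ M := by omega
  have hMr : (M:ℝ) ≤ 2 * N := by exact_mod_cast Nat.le_of_lt hNM
  have hq1r : (q1:ℝ) ≤ M := by exact_mod_cast hq1M
  have hMr0 : (0:ℝ) ≤ M := by positivity
  have hq1pos' : (0:ℝ) < q1 := by
    have : 0 < q1 := by omega
    exact_mod_cast this
  rcases le_total N q1 with hcase | hcase
  · have h := blockA q1 a1 N hcop (-(m:ℤ)) hN2 hcase
    have goalchain : (1:ℝ)/128 * M ≤ (N:ℝ) * N / (32 * q1) := by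
      rw [div_mul_eq_mul_div, div_le_div_iff₀ (by norm_num) (by positivity)]
      have h2 : (M:ℝ) * M ≤ (2*N) * (2*N) := mul_le_mul hMr hMr hMr0 (by positivity)
      nlinarith [mul_le_mul_of_nonneg_left hq1r (by linarith : (0:ℝ) ≤ M)]
    linarith
  · have h := blockB q1 a1 N hq12 hcop (-(m:ℤ)) hcase
    have : (1:ℝ)/128 * M ≤ (N:ℝ)/64 := by linarith
    linarith
end
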